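/- arXiv:1706.00075 — 8 statements merged into one kernel-verified Lean document; each statement's English description precedes it below -/
import Mathlib

section
/- Let G be a group, let H₁ and H₂ be subgroups of G, and let N be a normal subgroup of G. If H₁ and H₂ are locally conjugate in G, then H₁ ∩ N and H₂ ∩ N are locally conjugate in G. -/
/-- Subgroups `H₁` and `H₂` of a group `G` are locally conjugate in `G` if there is a
bijection `f : H₁ → H₂` such that `h` and `f h` are conjugate in `G` for every `h ∈ H₁`. -/
def IsLocallyConjugate {G : Type*} [Group G] (H₁ H₂ : Subgroup G) : Prop :=
  ∃ f : H₁ ≃ H₂, ∀ h : H₁, IsConj (h : G) ((f h : G))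

/-- If `H₁` and `H₂` are locally conjugate in `G` and `N ⊴ G`, then
`H₁ ∩ N` and `H₂ ∩ N` are locally conjugate in `G`. -/
theorem locallyConjugate_inf_normal
    {G : Type*} [Group G] (H₁ H₂ N : Subgroup G) (hN : N.Normal)
    (h : IsLocallyConjugate H₁ H₂) :
    IsLocallyConjugate (H₁ ⊓ N) (H₂ ⊓ N) := by
  obtain ⟨f, hf⟩ := h
  have hmem : ∀ x : G, x ∈ N → ∀ y : G, IsConj x y → y ∈ N := by
    intro x hx y hxy
    obtain ⟨c, hc⟩ := isConj_iff.mp hxy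
    rw [← hc]
    exact hN.conj_mem x hx c
  refine ⟨{
    toFun := fun x => ⟨(f ⟨x, x.2.1⟩ : G), (f ⟨x, x.2.1⟩).2,
      hmem x x.2.2 _ (hf ⟨x, x.2.1⟩)⟩
    invFun := fun y => ⟨(f.symm ⟨y, y.2.1⟩ : G), (f.symm ⟨y, y.2.1⟩).2, by
      have := hf (f.symm ⟨y, y.2.1⟩)
      rw [f.apply_symm_apply] at this
      exact hmem y y.2.2 _ this.symm⟩
    left_inv := fun x => by
      ext
      simp
    right_inv := fun y => by
      ext
      simp }, fun x => hf ⟨x, x.2.1⟩⟩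
end

section
/- Let G and G' be finite groups, let H₁ and H₂ be subgroups of G, and let φ : G → G' be a surjective group homomorphism. If H₁ and H₂ are locally conjugate in G, then the images φ(H₁) and φ(H₂) are locally conjugate in G'. -/
/-- For a surjective group hom `ψ` and a predicate `P` on the codomain, the elements of the
domain satisfying `P ∘ ψ` biject with pairs (element of codomain satisfying `P`, kernel element). -/
lemma card_comp_surjective_aux {A B : Type*} [Group A] [Group B]
    (ψ : A →* B) (hs : Function.Surjective ψ) (P : B → Prop) :
    Nat.card {a : A // P (ψ a)} = Nat.card {b : B // P b} * Nat.card ψ.ker := by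
  rw [← Nat.card_prod]
  refine Nat.card_congr ?_
  classical
  let s : B → A := Function.surjInv hs
  have hses : ∀ b, ψ (s b) = b := Function.surjInv_eq hs
  refine
    { toFun := fun a => (⟨ψ a.1, a.2⟩, ⟨(s (ψ a.1))⁻¹ * a.1, ?_⟩)
      invFun := fun bk => ⟨s bk.1.1 * bk.2.1, ?_⟩
      left_inv := ?_
      right_inv := ?_ }
  · simp [MonoidHom.mem_ker, hses]
  · have hk : ψ bk.2.1 = 1 := bk.2.2
    simp [hses, hk, bk.1.2]
  · rintro ⟨a, ha⟩
    simp
  · rintro ⟨⟨b, hb⟩, ⟨k, hk⟩⟩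
    have hk' : ψ k = 1 := hk
    ext <;> simp [hses, hk']

/-- If two finite types fiber over `γ` with equal fiber cardinalities, there is a bijection
respecting the fibering. -/
lemma exists_equiv_of_fiber_card {α β γ : Type*} [Finite α] [Finite β]
    (p : α → γ) (q : β → γ)
    (h : ∀ c, Nat.card {a // p a = c} = Nat.card {b // q b = c}) :
    ∃ e : α ≃ β, ∀ a, q (e a) = p a := by
  have key : ∀ c, Nonempty ({a // p a = c} ≃ {b // q b = c}) := fun c =>
    Finite.card_eq.mp (h c)
  classical
  let ec : ∀ c, {a // p a = c} ≃ {b // q b = c} := fun c => (key c).some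
  refine ⟨(Equiv.sigmaFiberEquiv p).symm.trans
    ((Equiv.sigmaCongrRight ec).trans (Equiv.sigmaFiberEquiv q)), fun a => ?_⟩
  exact (ec ((Equiv.sigmaFiberEquiv p).symm a).1 ((Equiv.sigmaFiberEquiv p).symm a).2).2

/-- If `G, G'` are finite groups, `φ : G →* G'` is surjective and
`H₁, H₂ ≤ G` are locally conjugate in `G`, then `φ(H₁)` and `φ(H₂)` are locally
conjugate in `G'`. -/
theorem locallyConjugate_map_of_surjective
    {G G' : Type*} [Group G] [Group G'] [Finite G] [Finite G']
    (H₁ H₂ : Subgroup G) (φ : G →* G') (hφ : Function.Surjective φ)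
    (h : IsLocallyConjugate H₁ H₂) :
    IsLocallyConjugate (H₁.map φ) (H₂.map φ) := by
  obtain ⟨f, hf⟩ := h
  have hfc : ∀ h : H₁, IsConj (φ h) (φ (f h)) := fun h => φ.map_isConj (hf h)
  set ψ₁ := φ.subgroupMap H₁ with hψ₁
  set ψ₂ := φ.subgroupMap H₂ with hψ₂
  have hs₁ : Function.Surjective ψ₁ := φ.subgroupMap_surjective H₁
  have hs₂ : Function.Surjective ψ₂ := φ.subgroupMap_surjective H₂
  have hψ₁c : ∀ h : H₁, ((ψ₁ h : H₁.map φ) : G') = φ h := fun _ => rfl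
  have hψ₂c : ∀ h : H₂, ((ψ₂ h : H₂.map φ) : G') = φ h := fun _ => rfl
  -- kernels have the same cardinality
  have hker : Nat.card ψ₁.ker = Nat.card ψ₂.ker := by
    refine Nat.card_congr (Equiv.subtypeEquiv f fun a => ?_)
    have : φ a = 1 ↔ φ (f a) = 1 := by
      constructor
      · intro h1
        have := hfc a
        rw [h1] at this
        exact isConj_one_right.mp this
      · intro h1
        have := (hfc a).symm
        rw [h1] at this
        exact isConj_one_right.mp this
    constructor
    · intro ha
      have : φ (f a) = 1 := this.mp (congrArg Subtype.val (ha : ψ₁ a = 1))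
      exact Subtype.ext this
    · intro ha
      have : φ a = 1 := this.mpr (congrArg Subtype.val (ha : ψ₂ (f a) = 1))
      exact Subtype.ext this
  have hkerpos : 0 < Nat.card ψ₁.ker := Nat.card_pos
  -- fiberwise cardinalities of the images agree
  have hcard : ∀ c : ConjClasses G',
      Nat.card {x : H₁.map φ // ConjClasses.mk (x : G') = c} =
      Nat.card {x : H₂.map φ // ConjClasses.mk (x : G') = c} := by
    intro c
    have h1 := card_comp_surjective_aux ψ₁ hs₁ (fun x => ConjClasses.mk (x : G') = c)
    have h2 := card_comp_surjective_aux ψ₂ hs₂ (fun x => ConjClasses.mk (x : G') = c)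
    have hmid : Nat.card {a : H₁ // ConjClasses.mk ((ψ₁ a : H₁.map φ) : G') = c} =
        Nat.card {a : H₂ // ConjClasses.mk ((ψ₂ a : H₂.map φ) : G') = c} := by
      refine Nat.card_congr (Equiv.subtypeEquiv f fun a => ?_)
      rw [hψ₁c, hψ₂c]
      have : ConjClasses.mk (φ (a : G)) = ConjClasses.mk (φ ((f a : H₂) : G)) :=
        ConjClasses.mk_eq_mk_iff_isConj.mpr (hfc a)
      rw [this]
    have := h1.symm.trans (hmid.trans h2)
    rw [hker] at this
    exact Nat.eq_of_mul_eq_mul_right (hker ▸ hkerpos) this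
  obtain ⟨e, he⟩ := exists_equiv_of_fiber_card
    (fun x : H₁.map φ => ConjClasses.mk (x : G'))
    (fun x : H₂.map φ => ConjClasses.mk (x : G')) hcard
  exact ⟨e, fun x => ConjClasses.mk_eq_mk_iff_isConj.mp (he x).symm⟩
end

section
/- Let G be a group and let H₁ and H₂ be finite subgroups of G that are locally conjugate in G. If H₁ is cyclic, then H₂ is cyclic and H₁ and H₂ are conjugate in G, i.e. there exists g ∈ G with gH₁g⁻¹ = H₂. -/
/-- If `H₁, H₂` are finite locally conjugate subgroups of `G` and `H₁`
is cyclic, then `H₂` is cyclic and `H₁` and `H₂` are conjugate in `G`. -/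
theorem locallyConjugate_cyclic
    {G : Type*} [Group G] (H₁ H₂ : Subgroup G) [Finite H₁] [Finite H₂]
    (h : IsLocallyConjugate H₁ H₂) (hc : IsCyclic H₁) :
    IsCyclic H₂ ∧ ∃ g : G, Subgroup.map (MulAut.conj g).toMonoidHom H₁ = H₂ := by
  obtain ⟨f, hf⟩ := h
  obtain ⟨x, hx⟩ := hc.exists_generator
  have hcard : Nat.card H₁ = Nat.card H₂ := Nat.card_congr f
  -- H₁ = zpowers of x
  have hH1 : H₁ = Subgroup.zpowers (x : G) := by
    apply le_antisymm
    · intro a ha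
      obtain ⟨n, hn⟩ := hx ⟨a, ha⟩
      exact ⟨n, congrArg Subtype.val hn⟩
    · rw [Subgroup.zpowers_le]; exact x.2
  -- conjugating element
  obtain ⟨g, hg⟩ := isConj_iff.mp (hf x)
  -- order computations
  have hox : orderOf (x : G) = Nat.card H₂ := by
    rw [Subgroup.orderOf_coe, orderOf_eq_card_of_forall_mem_zpowers hx, hcard]
  have hofx : orderOf ((f x : G)) = Nat.card H₂ := by
    obtain ⟨c, hsc⟩ := hf x
    rw [← hsc.orderOf_eq]
    exact hox
  have hzp : Subgroup.zpowers ((f x : G)) = H₂ := by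
    apply Subgroup.eq_of_le_of_card_ge
    · rw [Subgroup.zpowers_le]; exact (f x).2
    · rw [Nat.card_zpowers, hofx]
  constructor
  · constructor
    refine ⟨⟨(f x : G), (f x).2⟩, fun y => ?_⟩
    have : (y : G) ∈ Subgroup.zpowers ((f x : G)) := by rw [hzp]; exact y.2
    obtain ⟨n, hn⟩ := this
    exact ⟨n, Subtype.ext (by simpa using hn)⟩
  · refine ⟨g, ?_⟩
    rw [hH1, MonoidHom.map_zpowers]
    simpa [hg] using hzp
end

section
/- Let A₁ and A₂ be 2×2 matrices over ℤ/p²ℤ, and set κᵢ = 1 + p·Aᵢ for i = 1, 2; each κᵢ is invertible and hence an element of GL₂(ℤ/p²ℤ). Then κ₁ and κ₂ are conjugate in GL₂(ℤ/p²ℤ) if and only if the entrywise reductions of A₁ and A₂ modulo p are conjugate by an element of GL₂(ℤ/pℤ), i.e. there exists g ∈ GL₂(ℤ/pℤ) with g·(A₁ mod p)·g⁻¹ = (A₂ mod p). -/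
open Matrix

/-- `GL₂(ℤ/nℤ)`. -/
abbrev GL2 (n : ℕ) : Type := GL (Fin 2) (ZMod n)

/-- Reduction modulo `p` from `ℤ/p²ℤ` to `ℤ/pℤ`. -/
def red (p : ℕ) : ZMod (p^2) →+* ZMod p :=
  ZMod.castHom (dvd_pow_self p (by norm_num)) (ZMod p)

/-- The natural homomorphism `φ : GL₂(ℤ/p²ℤ) →* GL₂(ℤ/pℤ)` given by entrywise
reduction modulo `p`. -/
def phi (p : ℕ) : GL2 (p^2) →* GL2 p :=
  Matrix.GeneralLinearGroup.map (red p)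

/-- The element `1 + p • A` of `GL₂(ℤ/p²ℤ)` (its inverse is `1 - p • A`). -/
def kerUnit {p : ℕ} (A : Matrix (Fin 2) (Fin 2) (ZMod (p^2))) : GL2 (p^2) where
  val := 1 + (p : ZMod (p^2)) • A
  inv := 1 - (p : ZMod (p^2)) • A
  val_inv := by
    have h : ((p : ZMod (p^2)) • A) * ((p : ZMod (p^2)) • A) = 0 := by
      rw [smul_mul_assoc, mul_smul_comm, smul_smul, ← Nat.cast_mul, ← pow_two,
        ZMod.natCast_self, zero_smul]
    rw [add_mul, one_mul, mul_sub, mul_one, h, sub_zero]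
    abel
  inv_val := by
    have h : ((p : ZMod (p^2)) • A) * ((p : ZMod (p^2)) • A) = 0 := by
      rw [smul_mul_assoc, mul_smul_comm, smul_smul, ← Nat.cast_mul, ← pow_two,
        ZMod.natCast_self, zero_smul]
    rw [sub_mul, one_mul, mul_add, mul_one, h, add_zero]
    abel

/-- The antidiagonal swap matrix `!![0,1;1,0]` as an element of `GL₂(ℤ/p²ℤ)`. -/
def swapGL (p : ℕ) : GL2 (p^2) where
  val := !![0, 1; 1, 0]
  inv := !![0, 1; 1, 0]
  val_inv := by
    ext i j
    fin_cases i <;> fin_cases j <;>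
      simp [Matrix.mul_apply, Fin.sum_univ_succ, Matrix.one_apply]
  inv_val := by
    ext i j
    fin_cases i <;> fin_cases j <;>
      simp [Matrix.mul_apply, Fin.sum_univ_succ, Matrix.one_apply]

/-- Subgroups `H₁` and `H₂` of `G` are conjugate in `G`: `g H₁ g⁻¹ = H₂` for some `g`. -/
def IsConjugateSubgroup {G : Type*} [Group G] (H₁ H₂ : Subgroup G) : Prop :=
  ∃ g : G, Subgroup.map (MulAut.conj g).toMonoidHom H₁ = H₂

/-- Nontrivially locally conjugate: locally conjugate but not conjugate. -/
def IsNontriviallyLocallyConjugate {G : Type*} [Group G] (H₁ H₂ : Subgroup G) : Prop :=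
  IsLocallyConjugate H₁ H₂ ∧ ¬ IsConjugateSubgroup H₁ H₂

lemma red_eq_zero {p : ℕ} [Fact p.Prime] (z : ZMod (p^2)) :
    red p z = 0 ↔ p ∣ z.val := by
  rw [red, ZMod.castHom_apply, ← ZMod.natCast_val, ZMod.natCast_eq_zero_iff]

lemma pmul_eq_zero {p : ℕ} [Fact p.Prime] (z : ZMod (p^2)) :
    (p : ZMod (p^2)) * z = 0 ↔ red p z = 0 := by
  have hp : 0 < p := (Fact.out : p.Prime).pos
  have hz : ((z.val : ℕ) : ZMod (p^2)) = z := ZMod.natCast_rightInverse z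
  have key : ∀ n : ℕ, (p^2 ∣ p * n ↔ p ∣ n) := fun n => by
    rw [pow_two, Nat.mul_dvd_mul_iff_left hp]
  rw [red_eq_zero]
  conv_lhs => rw [← hz]
  rw [← Nat.cast_mul, ZMod.natCast_eq_zero_iff, key]

lemma pmul_eq {p : ℕ} [Fact p.Prime] (x y : ZMod (p^2)) :
    (p : ZMod (p^2)) * x = (p : ZMod (p^2)) * y ↔ red p x = red p y := by
  rw [← sub_eq_zero, ← mul_sub, pmul_eq_zero, map_sub, sub_eq_zero]

lemma psmul_eq {p : ℕ} [Fact p.Prime] (M N : Matrix (Fin 2) (Fin 2) (ZMod (p^2))) :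
    (p : ZMod (p^2)) • M = (p : ZMod (p^2)) • N ↔ M.map (red p) = N.map (red p) := by
  constructor <;> intro h <;> ext i j <;>
    have := congrFun (congrFun h i) j
  · simpa [Matrix.map_apply, ← pmul_eq] using this
  · simpa [Matrix.map_apply, pmul_eq, smul_eq_mul] using this

lemma isUnit_of_red {p : ℕ} [Fact p.Prime] (x : ZMod (p^2)) (h : IsUnit (red p x)) :
    IsUnit x := by
  have hp : p.Prime := Fact.out
  have hz : ((x.val : ℕ) : ZMod (p^2)) = x := ZMod.natCast_rightInverse x
  have hnd : ¬ (p ∣ x.val) := by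
    intro hd
    rw [(red_eq_zero x).mpr hd] at h
    exact not_isUnit_zero h
  rw [← hz, ZMod.isUnit_iff_coprime]
  exact Nat.Coprime.pow_right 2 (hp.coprime_iff_not_dvd.mpr hnd).symm

lemma phi_surjective {p : ℕ} [Fact p.Prime] : Function.Surjective (phi p) := by
  intro g
  set M : Matrix (Fin 2) (Fin 2) (ZMod (p^2)) :=
    fun i j => (((g : Matrix (Fin 2) (Fin 2) (ZMod p)) i j).val : ZMod (p^2)) with hM
  have hred : M.map (red p) = (g : Matrix (Fin 2) (Fin 2) (ZMod p)) := by
    ext i j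
    rw [Matrix.map_apply, hM]
    show red p ((((g : Matrix (Fin 2) (Fin 2) (ZMod p)) i j).val : ZMod (p^2))) = _
    rw [map_natCast, ZMod.natCast_zmod_val]
  have hdet : IsUnit M.det := by
    apply isUnit_of_red
    rw [RingHom.map_det, RingHom.mapMatrix_apply, hred]
    exact (Matrix.isUnit_iff_isUnit_det _).mp g.isUnit
  have hU : IsUnit M := (Matrix.isUnit_iff_isUnit_det M).mpr hdet
  refine ⟨hU.unit, Units.ext ?_⟩
  show (↑hU.unit : Matrix (Fin 2) (Fin 2) (ZMod (p^2))).map (red p) = _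
  rw [hU.unit_spec, hred]

lemma conj_kerUnit {p : ℕ} [Fact p.Prime] (G : GL2 (p^2))
    (A₁ A₂ : Matrix (Fin 2) (Fin 2) (ZMod (p^2))) :
    G * kerUnit A₁ * G⁻¹ = kerUnit A₂ ↔
      ((↑G : Matrix (Fin 2) (Fin 2) (ZMod (p^2))) * A₁ *
        (↑G⁻¹ : Matrix (Fin 2) (Fin 2) (ZMod (p^2)))).map (red p) = A₂.map (red p) := by
  rw [Units.ext_iff]
  have expand : (↑(G * kerUnit A₁ * G⁻¹) : Matrix (Fin 2) (Fin 2) (ZMod (p^2))) =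
      1 + (p : ZMod (p^2)) •
        ((↑G : Matrix (Fin 2) (Fin 2) (ZMod (p^2))) * A₁ *
          (↑G⁻¹ : Matrix (Fin 2) (Fin 2) (ZMod (p^2)))) := by
    show ((G : Matrix (Fin 2) (Fin 2) (ZMod (p^2))) * (1 + (p : ZMod (p^2)) • A₁)) *
      ((G⁻¹ : GL2 (p^2)) : Matrix (Fin 2) (Fin 2) (ZMod (p^2))) = _
    rw [mul_add, mul_one, add_mul, Units.mul_inv, mul_smul_comm, smul_mul_assoc]
  rw [expand]
  show _ = 1 + (p : ZMod (p^2)) • A₂ ↔ _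
  rw [add_right_inj, psmul_eq]

/-- For 2×2 matrices `A₁, A₂` over `ℤ/p²ℤ`, the elements
`κᵢ = 1 + p • Aᵢ` of `GL₂(ℤ/p²ℤ)` are conjugate in `GL₂(ℤ/p²ℤ)` iff the reductions of
`A₁` and `A₂` mod `p` are conjugate by an element of `GL₂(ℤ/pℤ)`. -/
theorem kerUnit_isConj_iff {p : ℕ} [Fact p.Prime] (hp : Odd p)
    (A₁ A₂ : Matrix (Fin 2) (Fin 2) (ZMod (p^2))) :
    IsConj (kerUnit A₁) (kerUnit A₂) ↔
      ∃ g : GL (Fin 2) (ZMod p),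
        (↑g : Matrix (Fin 2) (Fin 2) (ZMod p)) * A₁.map (red p) *
          (↑g⁻¹ : Matrix (Fin 2) (Fin 2) (ZMod p)) = A₂.map (red p) := by
  rw [isConj_iff]
  constructor
  · rintro ⟨G, hG⟩
    refine ⟨phi p G, ?_⟩
    rw [conj_kerUnit] at hG
    rw [Matrix.map_mul, Matrix.map_mul] at hG
    have h1 : (↑(phi p G) : Matrix (Fin 2) (Fin 2) (ZMod p)) =
        (↑G : Matrix (Fin 2) (Fin 2) (ZMod (p^2))).map (red p) := rfl
    have h2 : (↑(phi p G)⁻¹ : Matrix (Fin 2) (Fin 2) (ZMod p)) =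
        (↑G⁻¹ : Matrix (Fin 2) (Fin 2) (ZMod (p^2))).map (red p) := by
      rw [← map_inv]; rfl
    rw [h1, h2]
    exact hG
  · rintro ⟨g, hg⟩
    obtain ⟨G, rfl⟩ := phi_surjective g
    refine ⟨G, ?_⟩
    rw [conj_kerUnit, Matrix.map_mul, Matrix.map_mul]
    have h2 : ((↑G⁻¹ : Matrix (Fin 2) (Fin 2) (ZMod (p^2))).map (red p)) =
        (↑(phi p G)⁻¹ : Matrix (Fin 2) (Fin 2) (ZMod p)) := by
      rw [← map_inv]; rfl
    rw [h2]
    exact hg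
end

section
/- Let H₁ and H₂ be subgroups of GL₂(ℤ/p²ℤ) contained in ker φ. Then H₁ and H₂ are locally conjugate in GL₂(ℤ/p²ℤ) if and only if both of the following hold: (i) H₁ and H₂ contain exactly the same scalar matrices, and (ii) for every pair t, d ∈ ℤ/pℤ, the number of elements κ ∈ H₁ that can be written as κ = 1 + p·A with A a 2×2 matrix over ℤ/p²ℤ whose reduction modulo p has trace t and determinant d is equal to the corresponding number of such elements of H₂. -/
open Matrix

section Aux
set_option linter.unusedSectionVars false

open Classical in
noncomputable local instance : ∀ (P : Prop), Decidable P := fun _ => Classical.propDecidable _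

namespace LocConjAux

variable {p : ℕ} [Fact p.Prime]

lemma p_pos : 0 < p := (Fact.out : p.Prime).pos

lemma p_one_lt : 1 < p := (Fact.out : p.Prime).one_lt

instance : NeZero p := ⟨(Fact.out : p.Prime).ne_zero⟩

instance : NeZero (p ^ 2) := ⟨pow_ne_zero 2 (Fact.out : p.Prime).ne_zero⟩

lemma val_p : ((p : ZMod (p ^ 2))).val = p := by
  rw [ZMod.val_natCast, Nat.mod_eq_of_lt]
  have := p_one_lt (p := p)
  nlinarith

lemma red_eq_cast (x : ZMod (p ^ 2)) : red p x = ((x.val : ℕ) : ZMod p) := by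
  rw [red, ZMod.castHom_apply, ← ZMod.natCast_val]

/-- "division by p" map from `ZMod (p^2)` to `ZMod p`. -/
def divp (p : ℕ) (x : ZMod (p ^ 2)) : ZMod p := ((x.val / p : ℕ) : ZMod p)

lemma divp_p_mul (y : ZMod (p ^ 2)) : divp p ((p : ZMod (p ^ 2)) * y) = red p y := by
  unfold divp
  rw [ZMod.val_mul, val_p]
  obtain ⟨k, hk⟩ : ∃ k, y.val = k := ⟨_, rfl⟩
  have h1 : p * k % p ^ 2 = p * (k % p) := by
    rw [pow_two, Nat.mul_mod_mul_left]
  rw [hk, h1, Nat.mul_div_cancel_left _ p_pos, red_eq_cast, hk]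
  exact_mod_cast ZMod.natCast_mod k p

/-- lift `ZMod p` to `ZMod (p^2)` -/
def lift (p : ℕ) (a : ZMod p) : ZMod (p ^ 2) := ((a.val : ℕ) : ZMod (p ^ 2))

lemma red_lift (a : ZMod p) : red p (lift p a) = a := by
  rw [lift, red_eq_cast, ZMod.val_natCast]
  have : a.val % p ^ 2 = a.val := Nat.mod_eq_of_lt (lt_of_lt_of_le a.val_lt (by nlinarith [p_one_lt (p := p)]))
  rw [this, ZMod.natCast_val, ZMod.cast_id]

lemma eq_p_mul_of_red_zero {x : ZMod (p ^ 2)} (h : red p x = 0) :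
    x = (p : ZMod (p ^ 2)) * ((x.val / p : ℕ) : ZMod (p ^ 2)) := by
  rw [red_eq_cast] at h
  have hdvd : p ∣ x.val := (ZMod.natCast_eq_zero_iff _ _).mp h
  have : ((p * (x.val / p) : ℕ) : ZMod (p ^ 2)) = ((x.val : ℕ) : ZMod (p ^ 2)) := by
    rw [Nat.mul_div_cancel' hdvd]
  push_cast at this
  rw [this, ZMod.natCast_val, ZMod.cast_id]

lemma p_mul_eq_zero {x : ZMod (p ^ 2)} (h : red p x = 0) : (p : ZMod (p ^ 2)) * x = 0 := by
  rw [eq_p_mul_of_red_zero h, ← mul_assoc, ← Nat.cast_mul, ← pow_two, ZMod.natCast_self, zero_mul]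

lemma p_mul_congr {x y : ZMod (p ^ 2)} (h : red p x = red p y) :
    (p : ZMod (p ^ 2)) * x = (p : ZMod (p ^ 2)) * y := by
  have h0 : red p (x - y) = 0 := by rw [map_sub, h, sub_self]
  have := p_mul_eq_zero h0
  rw [mul_sub] at this
  linear_combination this

lemma red_congr_of_p_mul {x y : ZMod (p ^ 2)}
    (h : (p : ZMod (p ^ 2)) * x = (p : ZMod (p ^ 2)) * y) : red p x = red p y := by
  have h0 : (p : ZMod (p ^ 2)) * (x - y) = 0 := by rw [mul_sub, h, sub_self]
  have hv : ((p * (x - y).val : ℕ) : ZMod (p ^ 2)) = 0 := by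
    push_cast
    rw [ZMod.natCast_val, ZMod.cast_id]
    exact h0
  have hdvd : p ^ 2 ∣ p * (x - y).val := (ZMod.natCast_eq_zero_iff _ _).mp hv
  obtain ⟨k, hk⟩ : ∃ k, (x - y).val = k := ⟨_, rfl⟩
  rw [hk] at hdvd
  have hdvd2 : p ∣ (x - y).val := by
    rw [hk]
    rw [pow_two] at hdvd
    exact (Nat.mul_dvd_mul_iff_left (p_pos (p := p))).mp hdvd
  have : red p (x - y) = 0 := by
    rw [red_eq_cast]
    exact (ZMod.natCast_eq_zero_iff _ _).mpr hdvd2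
  rw [map_sub] at this
  linear_combination this

lemma smul_congr {A B : Matrix (Fin 2) (Fin 2) (ZMod (p ^ 2))}
    (h : A.map (red p) = B.map (red p)) :
    (p : ZMod (p ^ 2)) • A = (p : ZMod (p ^ 2)) • B := by
  ext i j
  simp only [Matrix.smul_apply, smul_eq_mul]
  exact p_mul_congr (by simpa [Matrix.map_apply] using congrFun (congrFun h i) j)

lemma map_red_congr {A B : Matrix (Fin 2) (Fin 2) (ZMod (p ^ 2))}
    (h : (p : ZMod (p ^ 2)) • A = (p : ZMod (p ^ 2)) • B) :
    A.map (red p) = B.map (red p) := by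
  ext i j
  simp only [Matrix.map_apply]
  refine red_congr_of_p_mul ?_
  have := congrFun (congrFun h i) j
  simpa [Matrix.smul_apply, smul_eq_mul] using this

lemma phi_val (g : GL2 (p ^ 2)) :
    ((phi p g : GL2 p) : Matrix (Fin 2) (Fin 2) (ZMod p)) =
      ((g : Matrix (Fin 2) (Fin 2) (ZMod (p ^ 2)))).map (red p) := rfl

lemma mem_ker_iff {g : GL2 (p ^ 2)} :
    g ∈ (phi p).ker ↔ ∃ A, (g : Matrix (Fin 2) (Fin 2) (ZMod (p ^ 2))) = 1 + (p : ZMod (p ^ 2)) • A := by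
  rw [MonoidHom.mem_ker]
  constructor
  · intro h
    have hval : ((g : Matrix (Fin 2) (Fin 2) (ZMod (p ^ 2)))).map (red p) = 1 := by
      rw [← phi_val, h, Units.val_one]
    refine ⟨Matrix.of fun i j =>
      (((((g : Matrix (Fin 2) (Fin 2) (ZMod (p ^ 2))) - 1) i j).val / p : ℕ) : ZMod (p ^ 2)), ?_⟩
    have hred : ∀ i j, red p (((g : Matrix (Fin 2) (Fin 2) (ZMod (p ^ 2))) - 1) i j) = 0 := by
      intro i j
      rw [Matrix.sub_apply, map_sub]
      have h1 : red p ((g : Matrix (Fin 2) (Fin 2) (ZMod (p ^ 2))) i j) =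
          (1 : Matrix (Fin 2) (Fin 2) (ZMod p)) i j := by
        rw [← hval]; rfl
      rw [h1]
      by_cases hij : i = j <;> simp [Matrix.one_apply, hij]
    ext i j
    simp only [Matrix.add_apply, Matrix.smul_apply, Matrix.of_apply, smul_eq_mul]
    have := eq_p_mul_of_red_zero (hred i j)
    rw [Matrix.sub_apply] at this
    have h2 : (g : Matrix (Fin 2) (Fin 2) (ZMod (p ^ 2))) i j - (1 : Matrix _ _ _) i j =
        (p : ZMod (p ^ 2)) * _ := this
    rw [Matrix.sub_apply]
    linear_combination h2
  · rintro ⟨A, hA⟩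
    refine Units.ext ?_
    rw [phi_val, hA, Units.val_one]
    ext i j
    simp only [Matrix.map_apply, Matrix.add_apply, Matrix.smul_apply, smul_eq_mul, map_add,
      _root_.map_mul]
    have : red p ((p : ℕ) : ZMod (p ^ 2)) = 0 := by
      rw [map_natCast, ZMod.natCast_self]
    rw [this, zero_mul, add_zero]
    by_cases hij : i = j <;> simp [Matrix.one_apply, hij]

end LocConjAux

namespace LocConjAux

variable {p : ℕ} [Fact p.Prime]

/-- The reduction mod `p` of "`(g - 1)/p`". -/
noncomputable def Abar (g : GL2 (p ^ 2)) : Matrix (Fin 2) (Fin 2) (ZMod p) :=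
  Matrix.of fun i j => divp p (((g : Matrix (Fin 2) (Fin 2) (ZMod (p ^ 2))) - 1) i j)

lemma Abar_eq {g : GL2 (p ^ 2)} {A : Matrix (Fin 2) (Fin 2) (ZMod (p ^ 2))}
    (h : (g : Matrix (Fin 2) (Fin 2) (ZMod (p ^ 2))) = 1 + (p : ZMod (p ^ 2)) • A) :
    Abar g = A.map (red p) := by
  ext i j
  simp only [Abar, Matrix.of_apply, Matrix.map_apply, h, Matrix.sub_apply, Matrix.add_apply,
    Matrix.smul_apply, smul_eq_mul, add_sub_cancel_left]
  exact divp_p_mul (A i j)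

/-- `g` is a scalar matrix. -/
def IsSc (g : GL2 (p ^ 2)) : Prop :=
  ∃ w : ZMod (p ^ 2), (g : Matrix (Fin 2) (Fin 2) (ZMod (p ^ 2))) = w • 1

lemma conj_of_isSc {g : GL2 (p ^ 2)} (hg : IsSc g) (u : GL2 (p ^ 2)) : u * g * u⁻¹ = g := by
  obtain ⟨w, hw⟩ := hg
  refine Units.ext ?_
  rw [Units.val_mul, Units.val_mul, hw, mul_smul_comm, smul_mul_assoc, mul_one, Units.mul_inv]

lemma isConj_iff_eq_of_isSc {g h : GL2 (p ^ 2)} (hg : IsSc g) : IsConj g h ↔ g = h := by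
  constructor
  · intro hc
    obtain ⟨c, hc⟩ := isConj_iff.mp hc
    rw [← hc, conj_of_isSc hg c]
  · rintro rfl; exact IsConj.refl g

lemma conj_val {g : GL2 (p ^ 2)} {A : Matrix (Fin 2) (Fin 2) (ZMod (p ^ 2))}
    (hA : (g : Matrix (Fin 2) (Fin 2) (ZMod (p ^ 2))) = 1 + (p : ZMod (p ^ 2)) • A)
    (u : GL2 (p ^ 2)) :
    ((u * g * u⁻¹ : GL2 (p ^ 2)) : Matrix (Fin 2) (Fin 2) (ZMod (p ^ 2))) =
      1 + (p : ZMod (p ^ 2)) • ((u : Matrix (Fin 2) (Fin 2) (ZMod (p ^ 2))) * A *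
        ((u⁻¹ : GL2 (p ^ 2)) : Matrix (Fin 2) (Fin 2) (ZMod (p ^ 2)))) := by
  rw [Units.val_mul, Units.val_mul, hA, mul_add, add_mul, mul_one]
  have h1 : (u : Matrix (Fin 2) (Fin 2) (ZMod (p ^ 2))) *
      ((u⁻¹ : GL2 (p ^ 2)) : Matrix (Fin 2) (Fin 2) (ZMod (p ^ 2))) = 1 := Units.mul_inv u
  rw [mul_smul_comm, smul_mul_assoc, h1, mul_assoc]

lemma Abar_conj {g : GL2 (p ^ 2)} (hg : g ∈ (phi p).ker) (u : GL2 (p ^ 2)) :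
    Abar (u * g * u⁻¹) =
      ((phi p u : GL2 p) : Matrix (Fin 2) (Fin 2) (ZMod p)) * Abar g *
        (((phi p u)⁻¹ : GL2 p) : Matrix (Fin 2) (Fin 2) (ZMod p)) := by
  obtain ⟨A, hA⟩ := mem_ker_iff.mp hg
  rw [Abar_eq (conj_val hA u), Abar_eq hA]
  have h1 : (((u : Matrix (Fin 2) (Fin 2) (ZMod (p ^ 2))) * A *
      ((u⁻¹ : GL2 (p ^ 2)) : Matrix (Fin 2) (Fin 2) (ZMod (p ^ 2)))).map (red p)) =
      ((u : Matrix (Fin 2) (Fin 2) (ZMod (p ^ 2))).map (red p)) * (A.map (red p)) *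
      (((u⁻¹ : GL2 (p ^ 2)) : Matrix (Fin 2) (Fin 2) (ZMod (p ^ 2))).map (red p)) := by
    rw [Matrix.map_mul, Matrix.map_mul]
  rw [h1, ← phi_val, ← phi_val, ← map_inv]

lemma trace_Abar_conj {g : GL2 (p ^ 2)} (hg : g ∈ (phi p).ker) (u : GL2 (p ^ 2)) :
    (Abar (u * g * u⁻¹)).trace = (Abar g).trace := by
  rw [Abar_conj hg u, Matrix.trace_mul_comm, ← mul_assoc]
  have h1 : (((phi p u)⁻¹ : GL2 p) : Matrix (Fin 2) (Fin 2) (ZMod p)) *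
      ((phi p u : GL2 p) : Matrix (Fin 2) (Fin 2) (ZMod p)) = 1 := Units.inv_mul _
  rw [h1, one_mul]

lemma det_Abar_conj {g : GL2 (p ^ 2)} (hg : g ∈ (phi p).ker) (u : GL2 (p ^ 2)) :
    (Abar (u * g * u⁻¹)).det = (Abar g).det := by
  rw [Abar_conj hg u, Matrix.det_mul, Matrix.det_mul]
  have h1 : (((phi p u : GL2 p) : Matrix (Fin 2) (Fin 2) (ZMod p)) *
      (((phi p u)⁻¹ : GL2 p) : Matrix (Fin 2) (Fin 2) (ZMod p))).det = 1 := by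
    rw [Units.mul_inv]; exact Matrix.det_one
  rw [Matrix.det_mul] at h1
  calc ((phi p u : GL2 p) : Matrix (Fin 2) (Fin 2) (ZMod p)).det * (Abar g).det *
      (((phi p u)⁻¹ : GL2 p) : Matrix (Fin 2) (Fin 2) (ZMod p)).det
      = (((phi p u : GL2 p) : Matrix (Fin 2) (Fin 2) (ZMod p)).det *
        (((phi p u)⁻¹ : GL2 p) : Matrix (Fin 2) (Fin 2) (ZMod p)).det) * (Abar g).det := by ring
    _ = (Abar g).det := by rw [h1, one_mul]

lemma isSc_conj {g : GL2 (p ^ 2)} (hg : IsSc g) (u : GL2 (p ^ 2)) : IsSc (u * g * u⁻¹) := by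
  rw [conj_of_isSc hg u]; exact hg

open Classical in
/-- class function separating conjugacy classes inside `ker φ`. -/
noncomputable def cfun (g : GL2 (p ^ 2)) : GL2 (p ^ 2) ⊕ (ZMod p × ZMod p) :=
  if IsSc g then Sum.inl g else Sum.inr ((Abar g).trace, (Abar g).det)

lemma cfun_of_isSc {g : GL2 (p ^ 2)} (hg : IsSc g) : cfun g = Sum.inl g := by
  unfold cfun
  exact if_pos hg

lemma cfun_of_not_isSc {g : GL2 (p ^ 2)} (hg : ¬ IsSc g) :
    cfun g = Sum.inr ((Abar g).trace, (Abar g).det) := by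
  unfold cfun
  exact if_neg hg

lemma isUnit_of_red {x : ZMod (p ^ 2)} (h : IsUnit (red p x)) : IsUnit x := by
  rw [red_eq_cast] at h
  have h1 : Nat.Coprime x.val p := (ZMod.isUnit_iff_coprime _ _).mp h
  have h2 : Nat.Coprime x.val (p ^ 2) := Nat.Coprime.pow_right 2 h1
  have := (ZMod.isUnit_iff_coprime x.val (p ^ 2)).mpr h2
  rwa [ZMod.natCast_val, ZMod.cast_id] at this

lemma phi_surj : Function.Surjective (phi p) := by
  intro w
  set M : Matrix (Fin 2) (Fin 2) (ZMod (p ^ 2)) :=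
    ((w : Matrix (Fin 2) (Fin 2) (ZMod p))).map (lift p) with hM
  have hmap : M.map (red p) = (w : Matrix (Fin 2) (Fin 2) (ZMod p)) := by
    ext i j
    simp [hM, Matrix.map_apply, red_lift]
  have hdet : IsUnit M.det := by
    refine isUnit_of_red ?_
    have h1 : red p M.det = (M.map (red p)).det := (red p).map_det M
    rw [h1, hmap]
    exact (Matrix.isUnit_iff_isUnit_det _).mp ⟨w, rfl⟩
  have hMu : IsUnit M := (Matrix.isUnit_iff_isUnit_det M).mpr hdet
  obtain ⟨u, hu⟩ := hMu
  refine ⟨u, Units.ext ?_⟩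
  rw [phi_val]
  rw [hu, hmap]

end LocConjAux

namespace LocConjAux

variable {p : ℕ} [Fact p.Prime]

section Companion

variable {K : Type*} [Field K]

/-- Helper building a conjugator to the companion matrix from a cyclic vector. -/
lemma companion_of_vec {M : Matrix (Fin 2) (Fin 2) K} (v0 v1 : K)
    (hdet : v0 * (M 1 0 * v0 + M 1 1 * v1) - (M 0 0 * v0 + M 0 1 * v1) * v1 ≠ 0) :
    ∃ u : GL (Fin 2) K,
      M * (u : Matrix (Fin 2) (Fin 2) K) =
        (u : Matrix (Fin 2) (Fin 2) K) * !![0, -M.det; 1, M.trace] := by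
  set N : Matrix (Fin 2) (Fin 2) K :=
    !![v0, M 0 0 * v0 + M 0 1 * v1; v1, M 1 0 * v0 + M 1 1 * v1] with hN
  have hNdet : N.det ≠ 0 := by
    rw [hN, Matrix.det_fin_two_of]
    ring_nf
    ring_nf at hdet
    convert hdet using 2 <;> ring
  have hu : IsUnit N := (Matrix.isUnit_iff_isUnit_det N).mpr (isUnit_iff_ne_zero.mpr hNdet)
  obtain ⟨u, hu⟩ := hu
  refine ⟨u, ?_⟩
  rw [hu, hN]
  ext i j
  fin_cases i <;> fin_cases j <;>
    simp [Matrix.mul_apply, Fin.sum_univ_succ, Matrix.det_fin_two, Matrix.trace_fin_two] <;>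
    ring

lemma companion {M : Matrix (Fin 2) (Fin 2) K} (hM : ¬ ∃ w : K, M = w • 1) :
    ∃ u : GL (Fin 2) K,
      M * (u : Matrix (Fin 2) (Fin 2) K) =
        (u : Matrix (Fin 2) (Fin 2) K) * !![0, -M.det; 1, M.trace] := by
  by_cases h10 : M 1 0 ≠ 0
  · refine companion_of_vec 1 0 ?_
    simpa using h10
  by_cases h01 : M 0 1 ≠ 0
  · refine companion_of_vec 0 1 ?_
    simpa using h01
  push_neg at h10 h01
  by_cases hd : M 0 0 = M 1 1
  · exfalso
    exact hM ⟨M 0 0, by ext i j; fin_cases i <;> fin_cases j <;>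
      simp [Matrix.one_apply, h10, h01, hd]⟩
  · refine companion_of_vec 1 1 ?_
    rw [h10, h01]
    intro hcon
    apply hd
    have : M 1 1 - M 0 0 = 0 := by linear_combination hcon
    linear_combination -this

end Companion

lemma isSc_of_Abar_isSc {g : GL2 (p ^ 2)} {A : Matrix (Fin 2) (Fin 2) (ZMod (p ^ 2))}
    (hA : (g : Matrix (Fin 2) (Fin 2) (ZMod (p ^ 2))) = 1 + (p : ZMod (p ^ 2)) • A)
    (h : ∃ w : ZMod p, Abar g = w • 1) : IsSc g := by
  obtain ⟨w, hw⟩ := h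
  rw [Abar_eq hA] at hw
  have hmap : A.map (red p) = ((lift p w) • (1 : Matrix (Fin 2) (Fin 2) (ZMod (p ^ 2)))).map (red p) := by
    rw [hw]
    ext i j
    by_cases hij : i = j <;>
      simp [Matrix.map_apply, Matrix.smul_apply, Matrix.one_apply, hij, red_lift]
  have hsmul := smul_congr hmap
  refine ⟨1 + (p : ZMod (p ^ 2)) * lift p w, ?_⟩
  rw [hA, hsmul, smul_smul, add_smul, one_smul]

lemma isConj_of_semiconj {g h : GL2 (p ^ 2)} {A B : Matrix (Fin 2) (Fin 2) (ZMod (p ^ 2))}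
    (hA : (g : Matrix (Fin 2) (Fin 2) (ZMod (p ^ 2))) = 1 + (p : ZMod (p ^ 2)) • A)
    (hB : (h : Matrix (Fin 2) (Fin 2) (ZMod (p ^ 2))) = 1 + (p : ZMod (p ^ 2)) • B)
    (w : GL2 p)
    (hw : (w : Matrix (Fin 2) (Fin 2) (ZMod p)) * (A.map (red p)) =
      (B.map (red p)) * (w : Matrix (Fin 2) (Fin 2) (ZMod p))) : IsConj g h := by
  obtain ⟨u, hu⟩ := phi_surj (p := p) w
  rw [isConj_iff]
  refine ⟨u, Units.ext ?_⟩
  rw [conj_val hA u, hB]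
  congr 1
  refine smul_congr ?_
  have h1 : (((u : Matrix (Fin 2) (Fin 2) (ZMod (p ^ 2))) * A *
      ((u⁻¹ : GL2 (p ^ 2)) : Matrix (Fin 2) (Fin 2) (ZMod (p ^ 2)))).map (red p)) =
      (w : Matrix (Fin 2) (Fin 2) (ZMod p)) * (A.map (red p)) *
      ((w⁻¹ : GL2 p) : Matrix (Fin 2) (Fin 2) (ZMod p)) := by
    rw [Matrix.map_mul, Matrix.map_mul, ← phi_val, ← phi_val, map_inv, hu]
  rw [h1, hw, mul_assoc]
  have h2 : (w : Matrix (Fin 2) (Fin 2) (ZMod p)) *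
      ((w⁻¹ : GL2 p) : Matrix (Fin 2) (Fin 2) (ZMod p)) = 1 := Units.mul_inv w
  rw [h2, mul_one]

lemma isConj_of_nonscalar {g h : GL2 (p ^ 2)} (hg : g ∈ (phi p).ker) (hh : h ∈ (phi p).ker)
    (nsg : ¬ IsSc g) (nsh : ¬ IsSc h)
    (ht : (Abar g).trace = (Abar h).trace) (hd : (Abar g).det = (Abar h).det) :
    IsConj g h := by
  obtain ⟨A, hA⟩ := mem_ker_iff.mp hg
  obtain ⟨B, hB⟩ := mem_ker_iff.mp hh
  have nsA : ¬ ∃ w : ZMod p, Abar g = w • 1 := fun hc => nsg (isSc_of_Abar_isSc hA hc)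
  have nsB : ¬ ∃ w : ZMod p, Abar h = w • 1 := fun hc => nsh (isSc_of_Abar_isSc hB hc)
  obtain ⟨u₁, hu₁⟩ := companion nsA
  obtain ⟨u₂, hu₂⟩ := companion nsB
  rw [ht, hd] at hu₁
  refine isConj_of_semiconj hA hB (u₂ * u₁⁻¹) ?_
  rw [← Abar_eq hA, ← Abar_eq hB]
  have key : ((u₂ * u₁⁻¹ : GL (Fin 2) (ZMod p)) : Matrix (Fin 2) (Fin 2) (ZMod p)) * Abar g *
      (u₁ : Matrix (Fin 2) (Fin 2) (ZMod p)) =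
      Abar h * ((u₂ * u₁⁻¹ : GL (Fin 2) (ZMod p)) : Matrix (Fin 2) (Fin 2) (ZMod p)) *
      (u₁ : Matrix (Fin 2) (Fin 2) (ZMod p)) := by
    rw [Units.val_mul]
    calc (u₂ : Matrix (Fin 2) (Fin 2) (ZMod p)) *
        ((u₁⁻¹ : GL (Fin 2) (ZMod p)) : Matrix (Fin 2) (Fin 2) (ZMod p)) * Abar g *
        (u₁ : Matrix (Fin 2) (Fin 2) (ZMod p))
        = (u₂ : Matrix (Fin 2) (Fin 2) (ZMod p)) *
          (((u₁⁻¹ : GL (Fin 2) (ZMod p)) : Matrix (Fin 2) (Fin 2) (ZMod p)) *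
            (Abar g * (u₁ : Matrix (Fin 2) (Fin 2) (ZMod p)))) := by
          rw [mul_assoc, mul_assoc]
      _ = (u₂ : Matrix (Fin 2) (Fin 2) (ZMod p)) *
          (((u₁⁻¹ : GL (Fin 2) (ZMod p)) : Matrix (Fin 2) (Fin 2) (ZMod p)) *
            ((u₁ : Matrix (Fin 2) (Fin 2) (ZMod p)) * !![0, -(Abar h).det; 1, (Abar h).trace])) := by
          rw [hu₁]
      _ = (u₂ : Matrix (Fin 2) (Fin 2) (ZMod p)) * !![0, -(Abar h).det; 1, (Abar h).trace] := by
          rw [← mul_assoc ((u₁⁻¹ : GL (Fin 2) (ZMod p)) : Matrix (Fin 2) (Fin 2) (ZMod p)),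
            Units.inv_mul, one_mul]
      _ = Abar h * (u₂ : Matrix (Fin 2) (Fin 2) (ZMod p)) := hu₂.symm
      _ = Abar h * ((u₂ : Matrix (Fin 2) (Fin 2) (ZMod p)) *
          (((u₁⁻¹ : GL (Fin 2) (ZMod p)) : Matrix (Fin 2) (Fin 2) (ZMod p)) *
            (u₁ : Matrix (Fin 2) (Fin 2) (ZMod p)))) := by
          rw [Units.inv_mul, mul_one]
      _ = Abar h * ((u₂ : Matrix (Fin 2) (Fin 2) (ZMod p)) *
          ((u₁⁻¹ : GL (Fin 2) (ZMod p)) : Matrix (Fin 2) (Fin 2) (ZMod p))) *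
          (u₁ : Matrix (Fin 2) (Fin 2) (ZMod p)) := by
          rw [mul_assoc, mul_assoc]
      _ = Abar h * ((u₂ * u₁⁻¹ : GL (Fin 2) (ZMod p)) : Matrix (Fin 2) (Fin 2) (ZMod p)) *
          (u₁ : Matrix (Fin 2) (Fin 2) (ZMod p)) := by rw [Units.val_mul]
  exact (IsUnit.mul_left_injective ⟨u₁, rfl⟩) key

/-- The classification of conjugacy inside `ker φ`. -/
lemma isConj_iff_cfun {g h : GL2 (p ^ 2)} (hg : g ∈ (phi p).ker) (hh : h ∈ (phi p).ker) :
    IsConj g h ↔ cfun g = cfun h := by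
  by_cases sg : IsSc g
  · rw [isConj_iff_eq_of_isSc sg, cfun_of_isSc sg]
    constructor
    · rintro rfl; rw [cfun_of_isSc sg]
    · intro hc
      by_cases sh : IsSc h
      · rw [cfun_of_isSc sh] at hc
        exact Sum.inl.inj hc
      · rw [cfun_of_not_isSc sh] at hc
        exact absurd hc.symm (by simp)
  · by_cases sh : IsSc h
    · rw [isConj_comm, isConj_iff_eq_of_isSc sh, cfun_of_isSc sh, cfun_of_not_isSc sg]
      constructor
      · rintro rfl; exact absurd sh sg
      · intro hc; exact absurd hc (by simp)
    · rw [cfun_of_not_isSc sg, cfun_of_not_isSc sh]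
      constructor
      · intro hc
        obtain ⟨c, hc⟩ := isConj_iff.mp hc
        rw [← hc, trace_Abar_conj hg c, det_Abar_conj hg c]
      · intro hc
        simp only [Sum.inr.injEq, Prod.mk.injEq] at hc
        exact isConj_of_nonscalar hg hh sg sh hc.1 hc.2

end LocConjAux


namespace LocConjAux

variable {p : ℕ} [Fact p.Prime]

lemma locConj_iff_fibers (H₁ H₂ : Subgroup (GL2 (p ^ 2))) (h₁ : H₁ ≤ (phi p).ker)
    (h₂ : H₂ ≤ (phi p).ker) :
    IsLocallyConjugate H₁ H₂ ↔
      ∀ k, Nat.card {x : H₁ // cfun (x : GL2 (p ^ 2)) = k} =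
        Nat.card {x : H₂ // cfun (x : GL2 (p ^ 2)) = k} := by
  constructor
  · rintro ⟨f, hf⟩ k
    refine Nat.card_congr (Equiv.subtypeEquiv f fun x => ?_)
    rw [(isConj_iff_cfun (h₁ x.2) (h₂ (f x).2)).mp (hf x)]
  · intro hcard
    have e : ∀ k, {x : H₁ // (fun y : H₁ => cfun (y : GL2 (p ^ 2))) x = k} ≃
        {x : H₂ // (fun y : H₂ => cfun (y : GL2 (p ^ 2))) x = k} :=
      fun k => Classical.choice (Finite.card_eq.mp (hcard k))
    refine ⟨Equiv.ofFiberEquiv e, fun x => ?_⟩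
    have hm := Equiv.ofFiberEquiv_map e x
    exact (isConj_iff_cfun (h₁ x.2) (h₂ (Equiv.ofFiberEquiv e x).2)).mpr hm.symm

lemma cfun_eq_inl_iff {g x : GL2 (p ^ 2)} (hsc : IsSc g) : cfun x = Sum.inl g ↔ x = g := by
  constructor
  · intro hx
    by_cases hsx : IsSc x
    · exact Sum.inl.inj (by rw [← cfun_of_isSc hsx]; exact hx)
    · rw [cfun_of_not_isSc hsx] at hx
      exact absurd hx (by simp)
  · rintro rfl
    exact cfun_of_isSc hsc

lemma card_S_eq (H : Subgroup (GL2 (p ^ 2))) (hH : H ≤ (phi p).ker) (t d : ZMod p) :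
    Nat.card {g : GL2 (p ^ 2) // g ∈ H ∧
        ∃ A : Matrix (Fin 2) (Fin 2) (ZMod (p ^ 2)),
          (↑g : Matrix (Fin 2) (Fin 2) (ZMod (p ^ 2))) = 1 + (p : ZMod (p ^ 2)) • A ∧
          (A.map (red p)).trace = t ∧ (A.map (red p)).det = d} =
      Nat.card {g : GL2 (p ^ 2) // g ∈ H ∧ IsSc g ∧
        (Abar g).trace = t ∧ (Abar g).det = d} +
      Nat.card {x : H // cfun (x : GL2 (p ^ 2)) = Sum.inr (t, d)} := by
  classical
  have e1 : {g : GL2 (p ^ 2) // g ∈ H ∧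
        ∃ A : Matrix (Fin 2) (Fin 2) (ZMod (p ^ 2)),
          (↑g : Matrix (Fin 2) (Fin 2) (ZMod (p ^ 2))) = 1 + (p : ZMod (p ^ 2)) • A ∧
          (A.map (red p)).trace = t ∧ (A.map (red p)).det = d} ≃
      {g : GL2 (p ^ 2) // g ∈ H ∧ (Abar g).trace = t ∧ (Abar g).det = d} := by
    refine Equiv.subtypeEquivRight fun g => ?_
    constructor
    · rintro ⟨hm, A, hA, ht, hd⟩
      exact ⟨hm, by rw [Abar_eq hA]; exact ht, by rw [Abar_eq hA]; exact hd⟩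
    · rintro ⟨hm, ht, hd⟩
      obtain ⟨A, hA⟩ := mem_ker_iff.mp (hH hm)
      exact ⟨hm, A, hA, by rw [← Abar_eq hA]; exact ht, by rw [← Abar_eq hA]; exact hd⟩
  rw [Nat.card_congr e1]
  set T := {g : GL2 (p ^ 2) // g ∈ H ∧ (Abar g).trace = t ∧ (Abar g).det = d} with hT
  have e2 : ({x : T // IsSc (x : GL2 (p ^ 2))} ⊕ {x : T // ¬ IsSc (x : GL2 (p ^ 2))}) ≃ T :=
    Equiv.sumCompl _
  rw [← Nat.card_congr e2, Nat.card_sum]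
  congr 1
  · refine Nat.card_congr (((Equiv.subtypeSubtypeEquivSubtypeInter
      (fun g : GL2 (p ^ 2) => g ∈ H ∧ (Abar g).trace = t ∧ (Abar g).det = d)
      (fun g => IsSc g)).trans
      (Equiv.subtypeEquivRight fun g => ?_)))
    tauto
  · refine Nat.card_congr (((Equiv.subtypeSubtypeEquivSubtypeInter
      (fun g : GL2 (p ^ 2) => g ∈ H ∧ (Abar g).trace = t ∧ (Abar g).det = d)
      (fun g => ¬ IsSc g)).trans
      ((Equiv.subtypeEquivRight (q := fun g => g ∈ H ∧ cfun g = Sum.inr (t, d)) fun g => ?_).trans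
        (Equiv.subtypeSubtypeEquivSubtypeInter (fun g : GL2 (p ^ 2) => g ∈ H)
          (fun g => cfun g = Sum.inr (t, d))).symm)))
    constructor
    · rintro ⟨⟨hm, ht, hd⟩, hns⟩
      refine ⟨hm, ?_⟩
      rw [cfun_of_not_isSc hns, ht, hd]
    · rintro ⟨hm, hc⟩
      by_cases hsx : IsSc g
      · rw [cfun_of_isSc hsx] at hc
        exact absurd hc (by simp)
      · rw [cfun_of_not_isSc hsx] at hc
        simp only [Sum.inr.injEq, Prod.mk.injEq] at hc
        exact ⟨⟨hm, hc.1, hc.2⟩, hsx⟩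

lemma card_fiber_inl_congr (H₁ H₂ : Subgroup (GL2 (p ^ 2)))
    (hi : ∀ g : GL2 (p ^ 2), IsSc g → (g ∈ H₁ ↔ g ∈ H₂)) (g : GL2 (p ^ 2)) :
    Nat.card {x : H₁ // cfun (x : GL2 (p ^ 2)) = Sum.inl g} =
      Nat.card {x : H₂ // cfun (x : GL2 (p ^ 2)) = Sum.inl g} := by
  by_cases hsc : IsSc g
  · have key : ∀ H : Subgroup (GL2 (p ^ 2)),
        {x : H // cfun (x : GL2 (p ^ 2)) = Sum.inl g} ≃
          {h : GL2 (p ^ 2) // h ∈ H ∧ h = g} := fun H =>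
      (Equiv.subtypeSubtypeEquivSubtypeInter (fun h : GL2 (p ^ 2) => h ∈ H)
        (fun h => cfun h = Sum.inl g)).trans
          (Equiv.subtypeEquivRight fun h => by rw [cfun_eq_inl_iff hsc])
    refine Nat.card_congr (((key H₁).trans (Equiv.subtypeEquivRight fun h => ?_)).trans
      (key H₂).symm)
    constructor
    · rintro ⟨hm, rfl⟩; exact ⟨(hi _ hsc).mp hm, rfl⟩
    · rintro ⟨hm, rfl⟩; exact ⟨(hi _ hsc).mpr hm, rfl⟩
  · have h1 : IsEmpty {x : H₁ // cfun (x : GL2 (p ^ 2)) = Sum.inl g} := by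
      refine ⟨fun x => ?_⟩
      have hx := x.2
      by_cases hsx : IsSc (x.1 : GL2 (p ^ 2))
      · rw [cfun_of_isSc hsx] at hx
        exact hsc (Sum.inl.inj hx ▸ hsx)
      · rw [cfun_of_not_isSc hsx] at hx
        exact absurd hx (by simp)
    have h2 : IsEmpty {x : H₂ // cfun (x : GL2 (p ^ 2)) = Sum.inl g} := by
      refine ⟨fun x => ?_⟩
      have hx := x.2
      by_cases hsx : IsSc (x.1 : GL2 (p ^ 2))
      · rw [cfun_of_isSc hsx] at hx
        exact hsc (Sum.inl.inj hx ▸ hsx)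
      · rw [cfun_of_not_isSc hsx] at hx
        exact absurd hx (by simp)
    rw [Nat.card_of_isEmpty, Nat.card_of_isEmpty]

lemma mem_right_of_card (H₁ H₂ : Subgroup (GL2 (p ^ 2))) (g : GL2 (p ^ 2)) (hsc : IsSc g)
    (hcard : Nat.card {x : H₁ // cfun (x : GL2 (p ^ 2)) = Sum.inl g} =
      Nat.card {x : H₂ // cfun (x : GL2 (p ^ 2)) = Sum.inl g})
    (hg : g ∈ H₁) : g ∈ H₂ := by
  have h1 : Nonempty {x : H₁ // cfun (x : GL2 (p ^ 2)) = Sum.inl g} :=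
    ⟨⟨⟨g, hg⟩, cfun_of_isSc hsc⟩⟩
  have pos : 0 < Nat.card {x : H₁ // cfun (x : GL2 (p ^ 2)) = Sum.inl g} := Nat.card_pos
  rw [hcard] at pos
  obtain ⟨⟨x, hx⟩⟩ := (Nat.card_pos_iff.mp pos).1
  have hxg : (x : GL2 (p ^ 2)) = g := (cfun_eq_inl_iff hsc).mp hx
  rw [← hxg]
  exact x.2

end LocConjAux


end Aux

/-- Subgroups `H₁, H₂ ≤ ker φ` are locally conjugate in `GL₂(ℤ/p²ℤ)`
iff (i) they contain exactly the same scalar matrices, and (ii) for all `t, d ∈ ℤ/pℤ`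
they contain the same number of elements `1 + p•A` with the mod-`p` reduction of `A`
having trace `t` and determinant `d`. -/
theorem locallyConjugate_ker_iff {p : ℕ} [Fact p.Prime] (hp : Odd p)
    (H₁ H₂ : Subgroup (GL2 (p^2))) (h₁ : H₁ ≤ (phi p).ker) (h₂ : H₂ ≤ (phi p).ker) :
    IsLocallyConjugate H₁ H₂ ↔
      ((∀ g : GL2 (p^2),
          (∃ w : ZMod (p^2),
            (↑g : Matrix (Fin 2) (Fin 2) (ZMod (p^2))) = w • 1) → (g ∈ H₁ ↔ g ∈ H₂)) ∧
       ∀ t d : ZMod p,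
         Nat.card {g : GL2 (p^2) // g ∈ H₁ ∧
             ∃ A : Matrix (Fin 2) (Fin 2) (ZMod (p^2)),
               (↑g : Matrix (Fin 2) (Fin 2) (ZMod (p^2))) = 1 + (p : ZMod (p^2)) • A ∧
               (A.map (red p)).trace = t ∧ (A.map (red p)).det = d} =
         Nat.card {g : GL2 (p^2) // g ∈ H₂ ∧
             ∃ A : Matrix (Fin 2) (Fin 2) (ZMod (p^2)),
               (↑g : Matrix (Fin 2) (Fin 2) (ZMod (p^2))) = 1 + (p : ZMod (p^2)) • A ∧
               (A.map (red p)).trace = t ∧ (A.map (red p)).det = d}) := by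
  classical
  rw [LocConjAux.locConj_iff_fibers H₁ H₂ h₁ h₂]
  constructor
  · intro hf
    have hi : ∀ g : GL2 (p^2),
        (∃ w : ZMod (p^2), (↑g : Matrix (Fin 2) (Fin 2) (ZMod (p^2))) = w • 1) →
          (g ∈ H₁ ↔ g ∈ H₂) := fun g hg =>
      ⟨LocConjAux.mem_right_of_card H₁ H₂ g hg (hf _),
       LocConjAux.mem_right_of_card H₂ H₁ g hg (hf _).symm⟩
    refine ⟨hi, fun t d => ?_⟩
    rw [LocConjAux.card_S_eq H₁ h₁ t d, LocConjAux.card_S_eq H₂ h₂ t d, hf (Sum.inr (t, d))]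
    congr 1
    refine Nat.card_congr (Equiv.subtypeEquivRight fun g => ?_)
    constructor
    · rintro ⟨hm, hs, h3⟩
      exact ⟨(hi g hs).mp hm, hs, h3⟩
    · rintro ⟨hm, hs, h3⟩
      exact ⟨(hi g hs).mpr hm, hs, h3⟩
  · rintro ⟨hi, hii⟩ k
    have hi' : ∀ g : GL2 (p^2), LocConjAux.IsSc g → (g ∈ H₁ ↔ g ∈ H₂) := fun g hg => hi g hg
    match k with
    | Sum.inl g => exact LocConjAux.card_fiber_inl_congr H₁ H₂ hi' g
    | Sum.inr (t, d) =>
      have e1 := LocConjAux.card_S_eq H₁ h₁ t d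
      have e2 := LocConjAux.card_S_eq H₂ h₂ t d
      have hsc : Nat.card {g : GL2 (p^2) // g ∈ H₁ ∧ LocConjAux.IsSc g ∧
            (LocConjAux.Abar g).trace = t ∧ (LocConjAux.Abar g).det = d} =
          Nat.card {g : GL2 (p^2) // g ∈ H₂ ∧ LocConjAux.IsSc g ∧
            (LocConjAux.Abar g).trace = t ∧ (LocConjAux.Abar g).det = d} := by
        refine Nat.card_congr (Equiv.subtypeEquivRight fun g => ?_)
        constructor
        · rintro ⟨hm, hs, h3⟩
          exact ⟨(hi' g hs).mp hm, hs, h3⟩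
        · rintro ⟨hm, hs, h3⟩
          exact ⟨(hi' g hs).mpr hm, hs, h3⟩
      have h3 := hii t d
      omega
end

section
/- Let H₁ and H₂ be subgroups of GL₂(ℤ/p²ℤ). If H₁ ∩ ker φ = H₂ ∩ ker φ, φ(H₁) = φ(H₂), and p does not divide the order of φ(H₁), then H₁ and H₂ are conjugate in GL₂(ℤ/p²ℤ): there exists g ∈ GL₂(ℤ/p²ℤ) with gH₁g⁻¹ = H₂. -/
open Matrix

section AuxHelpers

variable {p : ℕ} [Fact p.Prime]

lemma aux_entry_mul_zero {a b : ZMod (p^2)} (ha : red p a = 0) (hb : red p b = 0) :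
    a * b = 0 := by
  haveI : NeZero (p^2) := ⟨pow_ne_zero 2 (Fact.out (p := p.Prime)).ne_zero⟩
  have ha' : a = ((a.val : ℕ) : ZMod (p^2)) := (ZMod.natCast_zmod_val a).symm
  have hb' : b = ((b.val : ℕ) : ZMod (p^2)) := (ZMod.natCast_zmod_val b).symm
  rw [ha', map_natCast] at ha
  rw [hb', map_natCast] at hb
  have hpa : p ∣ a.val := (ZMod.natCast_eq_zero_iff _ _).mp ha
  have hpb : p ∣ b.val := (ZMod.natCast_eq_zero_iff _ _).mp hb
  have : (p^2 : ℕ) ∣ a.val * b.val := by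
    have h := mul_dvd_mul hpa hpb; rwa [← pow_two] at h
  calc a * b = ((a.val * b.val : ℕ) : ZMod (p^2)) := by
        rw [Nat.cast_mul, ZMod.natCast_zmod_val, ZMod.natCast_zmod_val]
    _ = 0 := (ZMod.natCast_eq_zero_iff _ _).mpr this

lemma aux_matmul_zero {B C : Matrix (Fin 2) (Fin 2) (ZMod (p^2))}
    (hB : ∀ i j, red p (B i j) = 0) (hC : ∀ i j, red p (C i j) = 0) : B * C = 0 := by
  ext i j
  rw [Matrix.mul_apply, Matrix.zero_apply]
  exact Finset.sum_eq_zero fun k _ => aux_entry_mul_zero (hB i k) (hC k j)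

lemma aux_psmul_zero {B : Matrix (Fin 2) (Fin 2) (ZMod (p^2))}
    (hB : ∀ i j, red p (B i j) = 0) : p • B = 0 := by
  ext i j
  rw [Matrix.smul_apply, Matrix.zero_apply, nsmul_eq_mul]
  refine aux_entry_mul_zero ?_ (hB i j)
  rw [map_natCast, ZMod.natCast_self]

lemma aux_one_add_pow {R : Type*} [Ring R] (B : R) (h : B * B = 0) (n : ℕ) :
    (1 + B)^n = 1 + n • B := by
  induction n with
  | zero => simp
  | succ n ih =>
    rw [pow_succ, ih, add_mul, one_mul, mul_add, mul_one, smul_mul_assoc, h, smul_zero,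
      add_zero, succ_nsmul]
    abel

lemma aux_ker_entries {x : GL2 (p^2)} (hx : x ∈ (phi p).ker) (i j : Fin 2) :
    red p (((x : Matrix (Fin 2) (Fin 2) (ZMod (p^2))) - 1) i j) = 0 := by
  have hx' : phi p x = 1 := hx
  have h1 : (x : Matrix (Fin 2) (Fin 2) (ZMod (p^2))).map (red p) = 1 := by
    have := congrArg Units.val hx'
    simpa [phi, Matrix.GeneralLinearGroup.map, RingHom.mapMatrix_apply] using this
  have h2 : red p ((x : Matrix (Fin 2) (Fin 2) (ZMod (p^2))) i j)
      = (1 : Matrix (Fin 2) (Fin 2) (ZMod p)) i j := by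
    rw [← h1]; rfl
  rw [Matrix.sub_apply, map_sub, h2]
  by_cases hij : i = j <;> simp [Matrix.one_apply, hij]

lemma aux_ker_comm {x y : GL2 (p^2)} (hx : x ∈ (phi p).ker) (hy : y ∈ (phi p).ker) :
    x * y = y * x := by
  set X : Matrix (Fin 2) (Fin 2) (ZMod (p^2)) := (x : Matrix (Fin 2) (Fin 2) (ZMod (p^2)))
  set Y : Matrix (Fin 2) (Fin 2) (ZMod (p^2)) := (y : Matrix (Fin 2) (Fin 2) (ZMod (p^2)))
  have h1 : (X - 1) * (Y - 1) = 0 := aux_matmul_zero (aux_ker_entries hx) (aux_ker_entries hy)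
  have h2 : (Y - 1) * (X - 1) = 0 := aux_matmul_zero (aux_ker_entries hy) (aux_ker_entries hx)
  have key : ∀ A B : Matrix (Fin 2) (Fin 2) (ZMod (p^2)),
      A * B = (A - 1) * (B - 1) + A + B - 1 := by intro A B; noncomm_ring
  apply Units.ext
  show X * Y = Y * X
  rw [key X Y, key Y X, h1, h2]
  abel

lemma aux_ker_pow {x : GL2 (p^2)} (hx : x ∈ (phi p).ker) : x ^ p = 1 := by
  apply Units.ext
  set X : Matrix (Fin 2) (Fin 2) (ZMod (p^2)) := (x : Matrix (Fin 2) (Fin 2) (ZMod (p^2)))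
  have hB : (X - 1) * (X - 1) = 0 := aux_matmul_zero (aux_ker_entries hx) (aux_ker_entries hx)
  have hX : X = 1 + (X - 1) := by abel
  show X ^ p = 1
  rw [hX, aux_one_add_pow _ hB, aux_psmul_zero (aux_ker_entries hx), add_zero]

end AuxHelpers

set_option maxHeartbeats 1000000 in
/-- (Schur–Zassenhaus application.) If `H₁ ∩ ker φ = H₂ ∩ ker φ`,
`φ(H₁) = φ(H₂)` and `p ∤ |φ(H₁)|`, then `H₁` and `H₂` are conjugate in `GL₂(ℤ/p²ℤ)`. -/
theorem conjugate_of_eq_ker_and_image {p : ℕ} [Fact p.Prime] (hp : Odd p)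
    (H₁ H₂ : Subgroup (GL2 (p^2)))
    (hker : H₁ ⊓ (phi p).ker = H₂ ⊓ (phi p).ker)
    (him : H₁.map (phi p) = H₂.map (phi p))
    (hp' : ¬ p ∣ Nat.card (H₁.map (phi p))) :
    ∃ g : GL2 (p^2), Subgroup.map (MulAut.conj g).toMonoidHom H₁ = H₂ := by
  classical
  set N : Subgroup (GL2 (p ^ 2)) := (phi p).ker with hNdef
  haveI hNnormal : N.Normal := MonoidHom.normal_ker (phi p)
  set K : Subgroup (GL2 (p ^ 2)) := H₁ ⊓ N with hKdef
  have hK2 : K = H₂ ⊓ N := hker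
  have hKH₁ : K ≤ H₁ := by rw [hKdef]; exact inf_le_left
  have hKH₂ : K ≤ H₂ := by rw [hK2]; exact inf_le_left
  have hKN : K ≤ N := by rw [hKdef]; exact inf_le_right
  have hmemN : ∀ x : GL2 (p ^ 2), x ∈ N ↔ phi p x = 1 := by
    intro x; rw [hNdef]; exact MonoidHom.mem_ker
  have hcomm : ∀ x ∈ N, ∀ y ∈ N, x * y = y * x := fun x hx y hy => aux_ker_comm hx hy
  have hexp : ∀ x ∈ N, x ^ p = 1 := fun x hx => aux_ker_pow hx
  letI : CommGroup (↥N) :=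
    { (inferInstance : Group (↥N)) with
      mul_comm := fun a b => Subtype.ext (hcomm _ a.2 _ b.2) }
  have hconjfix : ∀ y ∈ N, ∀ w ∈ N, y * w * y⁻¹ = w := by
    intro y hy w hw
    rw [hcomm y hy w hw, mul_assoc, mul_inv_cancel, mul_one]
  have normK : ∀ g ∈ H₁, ∀ k ∈ K, g * k * g⁻¹ ∈ K := by
    intro g hg k hk
    rw [hKdef] at hk ⊢
    exact Subgroup.mem_inf.mpr
      ⟨H₁.mul_mem (H₁.mul_mem hg (Subgroup.mem_inf.mp hk).1) (H₁.inv_mem hg),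
        hNnormal.conj_mem _ (Subgroup.mem_inf.mp hk).2 _⟩
  -- the image Q and lifts s (into H₁) and t (into H₂)
  set Q : Subgroup (GL2 p) := H₁.map (phi p) with hQdef
  letI : Fintype ↥Q := Fintype.ofFinite _
  have hs0 : ∀ q : ↥Q, ∃ x, x ∈ H₁ ∧ phi p x = (q : GL2 p) := fun q => Subgroup.mem_map.mp q.2
  choose s hs1 hs2 using hs0
  have ht0 : ∀ q : ↥Q, ∃ x, x ∈ H₂ ∧ phi p x = (q : GL2 p) := by
    intro q
    have hq : (q : GL2 p) ∈ H₂.map (phi p) := by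
      rw [← him]; exact q.2
    exact Subgroup.mem_map.mp hq
  choose t ht1 ht2 using ht0
  have humem : ∀ q : ↥Q, t q * (s q)⁻¹ ∈ N := by
    intro q
    refine (hmemN _).mpr ?_
    rw [_root_.map_mul, _root_.map_inv, hs2, ht2, mul_inv_cancel]
  set u : ↥Q → ↥N := fun q => ⟨t q * (s q)⁻¹, humem q⟩ with hudef
  have hucoe : ∀ q : ↥Q, ((u q : ↥N) : GL2 (p ^ 2)) = t q * (s q)⁻¹ := fun q => rfl
  -- the quotient V = N ⧸ K'
  set K' : Subgroup ↥N := K.subgroupOf N with hK'def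
  have hK'mem : ∀ x : ↥N, x ∈ K' ↔ (x : GL2 (p ^ 2)) ∈ K := by
    intro x; rw [hK'def]; exact Subgroup.mem_subgroupOf
  haveI hK'n : K'.Normal := by
    constructor
    intro k hk g
    have h : g * k * g⁻¹ = k := by
      apply Subtype.ext
      show (g : GL2 (p ^ 2)) * k * (g : GL2 (p ^ 2))⁻¹ = k
      exact hconjfix _ g.2 _ k.2
    rw [h]; exact hk
  letI : CommGroup (↥N ⧸ K') :=
    { (inferInstance : Group (↥N ⧸ K')) with
      mul_comm := fun a b => by
        refine QuotientGroup.induction_on a fun x => QuotientGroup.induction_on b fun y => ?_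
        rw [← QuotientGroup.mk_mul, ← QuotientGroup.mk_mul]
        exact congrArg _ (Subtype.ext (hcomm _ x.2 _ y.2)) }
  set mkV : ↥N →* ↥N ⧸ K' := QuotientGroup.mk' K' with hmkVdef
  have hmkeq : ∀ x y : ↥N, mkV x = mkV y ↔ ∃ z ∈ K', x * z = y := by
    intro x y; rw [hmkVdef]; exact QuotientGroup.mk'_eq_mk' K'
  have hVexp : ∀ v : ↥N ⧸ K', v ^ p = 1 := by
    intro v
    refine QuotientGroup.induction_on v fun x => ?_
    have hx : x ^ p = 1 := by
      apply Subtype.ext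
      show ((x : GL2 (p ^ 2))) ^ p = 1
      exact hexp _ x.2
    show (mkV x) ^ p = 1
    rw [← _root_.map_pow, hx, _root_.map_one]
  -- the cocycle relation
  have cocy : ∀ q r : ↥Q,
      mkV (u (q * r)) = mkV (u q) * mkV (MulAut.conjNormal (s q) (u r)) := by
    intro q r
    rw [← _root_.map_mul]
    symm
    rw [hmkeq]
    refine ⟨(u q * MulAut.conjNormal (s q) (u r))⁻¹ * u (q * r), ?_, by group⟩
    refine (hK'mem _).mpr ?_
    have hwcoe : (((u q * MulAut.conjNormal (s q) (u r))⁻¹ * u (q * r) : ↥N) : GL2 (p ^ 2))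
        = (s q * s r) * ((t r)⁻¹ * ((t q)⁻¹ * t (q * r))) * (s (q * r))⁻¹ := by
      push_cast [hucoe, MulAut.conjNormal_apply]
      have hcoeQ : ((q * r : ↥Q) : GL2 p) = (q : GL2 p) * r := rfl
      group
    have he₁N : (t r)⁻¹ * ((t q)⁻¹ * t (q * r)) ∈ N := by
      refine (hmemN _).mpr ?_
      rw [_root_.map_mul, _root_.map_inv, _root_.map_mul, _root_.map_inv, ht2, ht2, ht2]
      have hcoeQ : ((q * r : ↥Q) : GL2 p) = (q : GL2 p) * r := rfl
      rw [hcoeQ]; group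
    have he₁K : (t r)⁻¹ * ((t q)⁻¹ * t (q * r)) ∈ K := by
      rw [hK2]
      exact Subgroup.mem_inf.mpr
        ⟨H₂.mul_mem (H₂.inv_mem (ht1 r)) (H₂.mul_mem (H₂.inv_mem (ht1 q)) (ht1 (q * r))), he₁N⟩
    rw [hKdef]
    refine Subgroup.mem_inf.mpr ⟨?_, ((u q * MulAut.conjNormal (s q) (u r))⁻¹ * u (q * r)).2⟩
    rw [hwcoe]
    exact H₁.mul_mem (H₁.mul_mem (H₁.mul_mem (hs1 q) (hs1 r)) (hKH₁ he₁K))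
      (H₁.inv_mem (hs1 (q * r)))
  -- averaging
  set m := Nat.card ↥Q with hmdef
  have hcop : Nat.Coprime m p :=
    Nat.Coprime.symm ((Nat.Prime.coprime_iff_not_dvd Fact.out).mpr hp')
  obtain ⟨a, -, ha⟩ := Nat.exists_mul_mod_eq_one_of_coprime hcop (Fact.out (p := p.Prime)).one_lt
  obtain ⟨d, hd⟩ : ∃ d, m * a = p * d + 1 :=
    ⟨m * a / p, by rw [← ha]; exact (Nat.div_add_mod _ _).symm⟩
  set c' : ↥N := ∏ r : ↥Q, u r with hc'def
  have hkey : ∀ q : ↥Q, mkV c' = (mkV (u q)) ^ m * mkV (MulAut.conjNormal (s q) c') := by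
    intro q
    have h1 : ∏ r : ↥Q, mkV (u (q * r)) = mkV c' := by
      rw [hc'def, _root_.map_prod]
      exact Equiv.prod_comp (Equiv.mulLeft q) fun r => mkV (u r)
    calc mkV c' = ∏ r : ↥Q, mkV (u (q * r)) := h1.symm
      _ = ∏ r : ↥Q, (mkV (u q) * mkV (MulAut.conjNormal (s q) (u r))) :=
          Finset.prod_congr rfl fun r _ => cocy q r
      _ = (∏ _r : ↥Q, mkV (u q)) * ∏ r : ↥Q, mkV (MulAut.conjNormal (s q) (u r)) :=
          Finset.prod_mul_distrib
      _ = (mkV (u q)) ^ m * mkV (MulAut.conjNormal (s q) c') := by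
          rw [Finset.prod_const, Finset.card_univ, ← Nat.card_eq_fintype_card, ← hmdef]
          congr 1
          calc ∏ r : ↥Q, mkV (MulAut.conjNormal (s q) (u r))
              = mkV (∏ r : ↥Q, MulAut.conjNormal (s q) (u r)) := (_root_.map_prod mkV _ _).symm
            _ = mkV (MulAut.conjNormal (s q) c') := by rw [hc'def, ← _root_.map_prod]
  have hv : ∀ q : ↥Q,
      mkV (u q) = mkV (c' ^ a) * (mkV (MulAut.conjNormal (s q) (c' ^ a)))⁻¹ := by
    intro q
    have hpow : (mkV (u q)) ^ (m * a) = mkV (u q) := by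
      rw [hd, pow_add, pow_mul, hVexp, one_pow, one_mul, pow_one]
    have e1 : (mkV (MulAut.conjNormal (s q) c')) ^ a
        = mkV (MulAut.conjNormal (s q) (c' ^ a)) := by
      rw [← _root_.map_pow, ← _root_.map_pow]
    have h2 : mkV (c' ^ a) = (mkV (u q)) ^ (m * a)
        * mkV (MulAut.conjNormal (s q) (c' ^ a)) := by
      rw [_root_.map_pow]
      conv_lhs => rw [hkey q]
      rw [mul_pow, ← pow_mul, e1]
    rw [hpow] at h2
    rw [h2]; group
  set n : ↥N := c' ^ a with hndef
  -- the key conjugation identities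
  have key1 : ∀ q : ↥Q, ∃ k ∈ K,
      (n : GL2 (p ^ 2)) * s q * (n : GL2 (p ^ 2))⁻¹ = t q * k := by
    intro q
    have h := hv q
    rw [← _root_.map_inv, ← _root_.map_mul] at h
    obtain ⟨z, hzK', hzeq⟩ := (hmkeq _ _).mp h.symm
    have hG := congrArg (fun y : ↥N => (y : GL2 (p ^ 2))) hzeq
    simp only [MulMemClass.coe_mul, InvMemClass.coe_inv, MulAut.conjNormal_apply, hucoe] at hG
    refine ⟨(s q)⁻¹ * (z : GL2 (p ^ 2))⁻¹ * s q, ?_, ?_⟩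
    · have hmem := normK ((s q)⁻¹) (H₁.inv_mem (hs1 q)) _ (K.inv_mem ((hK'mem z).mp hzK'))
      simpa [inv_inv] using hmem
    · have htq : t q = (t q * (s q)⁻¹) * s q := by group
      rw [← hG] at htq
      rw [htq]
      group
  have key2 : ∀ q : ↥Q, ∃ k ∈ K,
      (n : GL2 (p ^ 2))⁻¹ * t q * (n : GL2 (p ^ 2)) = s q * k := by
    intro q
    obtain ⟨k, hkK, hk⟩ := key1 q
    refine ⟨k⁻¹, K.inv_mem hkK, ?_⟩
    have hcnk : (n : GL2 (p ^ 2))⁻¹ * k⁻¹ * (n : GL2 (p ^ 2)) = k⁻¹ := by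
      have := hconjfix _ (N.inv_mem n.2) _ (N.inv_mem (hKN hkK))
      simpa [inv_inv] using this
    have htq2 : t q = (t q * k) * k⁻¹ := by group
    rw [← hk] at htq2
    rw [htq2]
    have hre : (n : GL2 (p ^ 2))⁻¹ * ((n : GL2 (p ^ 2)) * s q * (n : GL2 (p ^ 2))⁻¹ * k⁻¹)
        * (n : GL2 (p ^ 2))
        = s q * ((n : GL2 (p ^ 2))⁻¹ * k⁻¹ * (n : GL2 (p ^ 2))) := by group
    rw [hre, hcnk]
  -- conclusion
  refine ⟨(n : GL2 (p ^ 2)), le_antisymm ?_ ?_⟩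
  · rintro x hx
    rw [Subgroup.mem_map] at hx
    obtain ⟨h, hh, rfl⟩ := hx
    have hqmem : phi p h ∈ Q := by rw [hQdef]; exact Subgroup.mem_map_of_mem _ hh
    have hk1 : (s ⟨phi p h, hqmem⟩)⁻¹ * h ∈ K := by
      rw [hKdef]
      refine Subgroup.mem_inf.mpr
        ⟨H₁.mul_mem (H₁.inv_mem (hs1 _)) hh, (hmemN _).mpr ?_⟩
      rw [_root_.map_mul, _root_.map_inv, hs2]
      show (phi p h)⁻¹ * phi p h = 1
      rw [inv_mul_cancel]
    obtain ⟨k, hkK, hk⟩ := key1 ⟨phi p h, hqmem⟩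
    have hcn : (n : GL2 (p ^ 2)) * ((s ⟨phi p h, hqmem⟩)⁻¹ * h) * (n : GL2 (p ^ 2))⁻¹
        = (s ⟨phi p h, hqmem⟩)⁻¹ * h := hconjfix _ n.2 _ (hKN hk1)
    show (n : GL2 (p ^ 2)) * h * (n : GL2 (p ^ 2))⁻¹ ∈ H₂
    have hgoal : (n : GL2 (p ^ 2)) * h * (n : GL2 (p ^ 2))⁻¹
        = (t ⟨phi p h, hqmem⟩ * k) * ((s ⟨phi p h, hqmem⟩)⁻¹ * h) := by
      calc (n : GL2 (p ^ 2)) * h * (n : GL2 (p ^ 2))⁻¹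
          = ((n : GL2 (p ^ 2)) * s ⟨phi p h, hqmem⟩ * (n : GL2 (p ^ 2))⁻¹)
            * ((n : GL2 (p ^ 2)) * ((s ⟨phi p h, hqmem⟩)⁻¹ * h) * (n : GL2 (p ^ 2))⁻¹) := by
            group
        _ = (t ⟨phi p h, hqmem⟩ * k) * ((s ⟨phi p h, hqmem⟩)⁻¹ * h) := by rw [hk, hcn]
    rw [hgoal]
    exact H₂.mul_mem (H₂.mul_mem (ht1 _) (hKH₂ hkK)) (hKH₂ hk1)
  · intro x hx
    have hqmem : phi p x ∈ Q := by
      rw [him]; exact Subgroup.mem_map_of_mem _ hx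
    have hk2 : (t ⟨phi p x, hqmem⟩)⁻¹ * x ∈ K := by
      rw [hK2]
      refine Subgroup.mem_inf.mpr
        ⟨H₂.mul_mem (H₂.inv_mem (ht1 _)) hx, (hmemN _).mpr ?_⟩
      rw [_root_.map_mul, _root_.map_inv, ht2]
      show (phi p x)⁻¹ * phi p x = 1
      rw [inv_mul_cancel]
    obtain ⟨k, hkK, hk⟩ := key2 ⟨phi p x, hqmem⟩
    rw [Subgroup.mem_map]
    refine ⟨(n : GL2 (p ^ 2))⁻¹ * x * (n : GL2 (p ^ 2)), ?_, ?_⟩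
    · have hcn2 : (n : GL2 (p ^ 2))⁻¹ * ((t ⟨phi p x, hqmem⟩)⁻¹ * x) * (n : GL2 (p ^ 2))
          = (t ⟨phi p x, hqmem⟩)⁻¹ * x := by
        have := hconjfix _ (N.inv_mem n.2) _ (hKN hk2)
        simpa [inv_inv] using this
      have heq : (n : GL2 (p ^ 2))⁻¹ * x * (n : GL2 (p ^ 2))
          = (s ⟨phi p x, hqmem⟩ * k) * ((t ⟨phi p x, hqmem⟩)⁻¹ * x) := by
        calc (n : GL2 (p ^ 2))⁻¹ * x * (n : GL2 (p ^ 2))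
            = ((n : GL2 (p ^ 2))⁻¹ * t ⟨phi p x, hqmem⟩ * (n : GL2 (p ^ 2)))
              * ((n : GL2 (p ^ 2))⁻¹ * ((t ⟨phi p x, hqmem⟩)⁻¹ * x) * (n : GL2 (p ^ 2))) := by
              group
          _ = (s ⟨phi p x, hqmem⟩ * k) * ((t ⟨phi p x, hqmem⟩)⁻¹ * x) := by rw [hk, hcn2]
      rw [heq]
      exact H₁.mul_mem (H₁.mul_mem (hs1 _) (hKH₁ hkK)) (hKH₁ hk2)
    · show (n : GL2 (p ^ 2)) * ((n : GL2 (p ^ 2))⁻¹ * x * (n : GL2 (p ^ 2)))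
          * (n : GL2 (p ^ 2))⁻¹ = x
      group
end

section
/- Let H be a subgroup of GL₂(ℤ/p²ℤ) such that φ(H) contains the matrix !![1,1;0,1]. Suppose κ = 1 + p·!![a,b;c,d] is an element of H, where a, b, c, d ∈ ℤ/p²ℤ. Then: (1) if a ≢ d (mod p), then 1 + p·!![0,1;0,0] ∈ H; and (2) if c ≢ 0 (mod p), then both 1 + p·!![0,1;0,0] ∈ H and 1 + p·!![1,0;0,-1] ∈ H. -/
open Matrix

section Aux
variable {p : ℕ} [Fact p.Prime]

instance : NeZero (p^2) := ⟨pow_ne_zero 2 (Fact.out : p.Prime).ne_zero⟩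

lemma pmul_congr {x y : ZMod (p^2)} (h : red p x = red p y) :
    (p : ZMod (p^2)) * x = (p : ZMod (p^2)) * y := by
  have hx : ((x.val : ℕ) : ZMod (p^2)) = x := ZMod.natCast_rightInverse x
  have hy : ((y.val : ℕ) : ZMod (p^2)) = y := ZMod.natCast_rightInverse y
  have h' : (x.val : ZMod p) = (y.val : ZMod p) := by
    rw [← map_natCast (red p), ← map_natCast (red p), hx, hy]; exact h
  have hmod : x.val ≡ y.val [MOD p] := (ZMod.natCast_eq_natCast_iff _ _ _).mp h'
  have hmod2 : p * x.val ≡ p * y.val [MOD p^2] := by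
    have := hmod.mul_left' (c := p)
    rwa [← pow_two] at this
  calc (p : ZMod (p^2)) * x = ((p * x.val : ℕ) : ZMod (p^2)) := by push_cast [hx]; ring
    _ = ((p * y.val : ℕ) : ZMod (p^2)) := (ZMod.natCast_eq_natCast_iff _ _ _).mpr hmod2
    _ = (p : ZMod (p^2)) * y := by push_cast [hy]; ring

lemma kerUnit_congr {X Y : Matrix (Fin 2) (Fin 2) (ZMod (p^2))}
    (h : X.map (red p) = Y.map (red p)) : kerUnit X = kerUnit Y := by
  ext : 1
  show (1 : Matrix _ _ _) + (p : ZMod (p^2)) • X = 1 + (p : ZMod (p^2)) • Y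
  congr 1
  ext i j
  simp only [Matrix.smul_apply, smul_eq_mul]
  exact pmul_congr (by simpa [Matrix.map_apply] using Matrix.ext_iff.mpr h i j)

lemma kerUnit_mul (X Y : Matrix (Fin 2) (Fin 2) (ZMod (p^2))) :
    kerUnit X * kerUnit Y = kerUnit (X + Y) := by
  ext : 1
  show ((1 : Matrix _ _ _) + (p : ZMod (p^2)) • X) * (1 + (p : ZMod (p^2)) • Y)
      = 1 + (p : ZMod (p^2)) • (X + Y)
  have h : ((p : ZMod (p^2)) • X) * ((p : ZMod (p^2)) • Y) = 0 := by
    rw [smul_mul_assoc, mul_smul_comm, smul_smul, ← Nat.cast_mul, ← pow_two,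
      ZMod.natCast_self, zero_smul]
  rw [add_mul, one_mul, mul_add, mul_one, h, add_zero, smul_add]
  abel

lemma kerUnit_inv (X : Matrix (Fin 2) (Fin 2) (ZMod (p^2))) :
    (kerUnit X)⁻¹ = kerUnit (-X) := by
  ext : 1
  show (1 : Matrix _ _ _) - (p : ZMod (p^2)) • X = 1 + (p : ZMod (p^2)) • (-X)
  rw [smul_neg, sub_eq_add_neg]

lemma kerUnit_pow (X : Matrix (Fin 2) (Fin 2) (ZMod (p^2))) (n : ℕ) :
    (kerUnit X)^n = kerUnit ((n : ZMod (p^2)) • X) := by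
  induction n with
  | zero =>
    simp only [pow_zero, Nat.cast_zero, zero_smul]
    ext : 1
    show (1 : Matrix _ _ _) = 1 + (p : ZMod (p^2)) • (0 : Matrix _ _ _)
    simp
  | succ n ih =>
    have h : ((n+1 : ℕ) : ZMod (p^2)) • X = (n : ZMod (p^2)) • X + X := by
      push_cast
      rw [add_smul, one_smul]
    calc (kerUnit X)^(n+1) = (kerUnit X)^n * kerUnit X := pow_succ _ _
      _ = kerUnit ((n : ZMod (p^2)) • X) * kerUnit X := by rw [ih]
      _ = kerUnit ((n : ZMod (p^2)) • X + X) := kerUnit_mul _ _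
      _ = kerUnit (((n+1 : ℕ) : ZMod (p^2)) • X) := (congrArg kerUnit h).symm

lemma kerUnit_conj (τ : GL2 (p^2)) (X : Matrix (Fin 2) (Fin 2) (ZMod (p^2))) :
    τ * kerUnit X * τ⁻¹ = kerUnit ((τ : Matrix _ _ _) * X * ((τ⁻¹ : GL2 (p^2)) : Matrix _ _ _)) := by
  ext : 1
  show (τ : Matrix _ _ _) * ((1 : Matrix _ _ _) + (p : ZMod (p^2)) • X) * ((τ⁻¹ : GL2 (p^2)) : Matrix _ _ _)
      = 1 + (p : ZMod (p^2)) • ((τ : Matrix _ _ _) * X * _)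
  rw [mul_add, mul_one, add_mul, mul_smul_comm, smul_mul_assoc]
  congr 1
  rw [← Units.val_mul, mul_inv_cancel, Units.val_one]

end Aux


/-- Let `H ≤ GL₂(ℤ/p²ℤ)` with `!![1,1;0,1] ∈ φ(H)` and suppose
`κ = 1 + p•!![a,b;c,d] ∈ H`. If `a ≢ d (mod p)` then `1 + p•!![0,1;0,0] ∈ H`; and if
`c ≢ 0 (mod p)` then both `1 + p•!![0,1;0,0] ∈ H` and `1 + p•!![1,0;0,-1] ∈ H`. -/
theorem mem_of_unipotent_in_image {p : ℕ} [Fact p.Prime] (hp : Odd p)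
    (H : Subgroup (GL2 (p^2)))
    (hT : ∃ τ ∈ H, (↑(phi p τ) : Matrix (Fin 2) (Fin 2) (ZMod p)) = !![1, 1; 0, 1])
    (a b c d : ZMod (p^2)) (hκ : kerUnit !![a, b; c, d] ∈ H) :
    (red p a ≠ red p d → kerUnit !![0, 1; 0, 0] ∈ H) ∧
    (red p c ≠ 0 →
      kerUnit !![0, 1; 0, 0] ∈ H ∧ kerUnit !![1, 0; 0, -1] ∈ H) := by
  obtain ⟨τ, hτH, hτ⟩ := hT
  have hτmap : ((τ : Matrix (Fin 2) (Fin 2) (ZMod (p^2)))).map (red p) = !![1,1;0,1] := hτ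
  have huu : (!![1,1;0,1] : Matrix (Fin 2) (Fin 2) (ZMod p)) * !![1,-1;0,1] = 1 := by
    ext i j
    fin_cases i <;> fin_cases j <;>
      simp [Matrix.mul_apply, Fin.sum_univ_succ, Matrix.one_apply]
  have hτinvmap : (((τ⁻¹ : GL2 (p^2)) : Matrix (Fin 2) (Fin 2) (ZMod (p^2)))).map (red p)
      = !![1,-1;0,1] := by
    have h1 : (((τ⁻¹ : GL2 (p^2)) : Matrix (Fin 2) (Fin 2) (ZMod (p^2)))).map (red p)
        * ((τ : Matrix (Fin 2) (Fin 2) (ZMod (p^2)))).map (red p) = 1 := by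
      show (red p).mapMatrix _ * (red p).mapMatrix _ = 1
      rw [← _root_.map_mul, ← Units.val_mul, inv_mul_cancel, Units.val_one, _root_.map_one]
    calc (((τ⁻¹ : GL2 (p^2)) : Matrix _ _ _)).map (red p)
        = (((τ⁻¹ : GL2 (p^2)) : Matrix _ _ _)).map (red p) * (!![1,1;0,1] * !![1,-1;0,1]) := by
          rw [huu, mul_one]
      _ = ((((τ⁻¹ : GL2 (p^2)) : Matrix _ _ _)).map (red p) * ((τ : Matrix _ _ _)).map (red p))
          * !![1,-1;0,1] := by rw [hτmap, mul_assoc]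
      _ = !![1,-1;0,1] := by rw [h1, one_mul]
  have step : ∀ a b c d : ZMod (p^2), kerUnit !![a,b;c,d] ∈ H →
      kerUnit !![c, d-a-c; 0, -c] ∈ H := by
    intro a b c d hM
    have hmem : τ * kerUnit !![a,b;c,d] * τ⁻¹ * (kerUnit !![a,b;c,d])⁻¹ ∈ H :=
      H.mul_mem (H.mul_mem (H.mul_mem hτH hM) (H.inv_mem hτH)) (H.inv_mem hM)
    have heq : τ * kerUnit !![a,b;c,d] * τ⁻¹ * (kerUnit !![a,b;c,d])⁻¹
        = kerUnit !![c, d-a-c; 0, -c] := by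
      rw [kerUnit_conj, kerUnit_inv, kerUnit_mul]
      apply kerUnit_congr
      show (red p).mapMatrix _ = (red p).mapMatrix _
      simp only [map_add, _root_.map_mul, map_neg]
      simp only [RingHom.mapMatrix_apply]
      rw [hτmap, hτinvmap]
      ext i j
      fin_cases i <;> fin_cases j <;>
        simp [Matrix.mul_apply, Fin.sum_univ_succ, Matrix.map_apply, map_sub, map_neg,
          Matrix.vecMul, dotProduct] <;>
        ring
    exact heq ▸ hmem
  have hk1 : kerUnit !![c, d-a-c; 0, -c] ∈ H := step a b c d hκ
  have hk2 : kerUnit !![(0 : ZMod (p^2)), -c - c - 0; 0, 0] ∈ H := by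
    have := step c (d-a-c) 0 (-c) hk1
    rwa [neg_zero] at this
  have upper : ∀ t : ZMod (p^2), red p t ≠ 0 →
      kerUnit !![(0 : ZMod (p^2)), t; 0, 0] ∈ H → kerUnit !![0, 1; 0, 0] ∈ H := by
    intro t ht hmem
    have hn : ((((red p t)⁻¹).val : ℕ) : ZMod p) = (red p t)⁻¹ := ZMod.natCast_rightInverse _
    have key : (kerUnit !![(0 : ZMod (p^2)), t; 0, 0])^(((red p t)⁻¹).val)
        = kerUnit !![0, 1; 0, 0] := by
      rw [kerUnit_pow]
      apply kerUnit_congr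
      ext i j
      fin_cases i <;> fin_cases j <;>
        simp [Matrix.map_apply, _root_.map_mul, map_natCast, hn, inv_mul_cancel₀ ht]
    exact key ▸ H.pow_mem hmem _
  have h2 : (2 : ZMod p) ≠ 0 := by
    have hp2 : p ≠ 2 := by
      rintro rfl
      exact (by norm_num : ¬ Odd 2) hp
    intro h0
    have : ((2 : ℕ) : ZMod p) = 0 := by exact_mod_cast h0
    rw [ZMod.natCast_eq_zero_iff] at this
    exact hp2 ((Nat.prime_dvd_prime_iff_eq Fact.out Nat.prime_two).mp this)
  have hredt : ∀ x : ZMod (p^2), red p (-x - x - 0) = -(2 * red p x) := by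
    intro x
    simp only [map_sub, map_neg, map_zero]
    ring
  have upper_of_c : red p c ≠ 0 → kerUnit !![0, 1; 0, 0] ∈ H := by
    intro hc
    refine upper _ ?_ hk2
    rw [hredt]
    intro h0
    rcases mul_eq_zero.mp (neg_eq_zero.mp h0) with h | h
    · exact h2 h
    · exact hc h
  refine ⟨?_, ?_⟩
  · intro had
    by_cases hc : red p c = 0
    · have he : red p (d-a-c) ≠ 0 := by
        rw [map_sub, map_sub, hc, sub_zero, sub_ne_zero]
        exact Ne.symm had
      have heq : kerUnit !![c, d-a-c; 0, -c] = kerUnit !![0, d-a-c; 0, 0] := by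
        apply kerUnit_congr
        ext i j
        fin_cases i <;> fin_cases j <;> simp [Matrix.map_apply, map_neg, hc]
      exact upper _ he (heq ▸ hk1)
    · exact upper_of_c hc
  · intro hc
    refine ⟨upper_of_c hc, ?_⟩
    have hU := upper_of_c hc
    set e := d - a - c with he
    -- kill the upper-right entry of hk1
    have hm : ((((-(red p e)).val : ℕ)) : ZMod p) = -(red p e) := ZMod.natCast_rightInverse _
    have h1 : kerUnit !![(0 : ZMod (p^2)), (((-(red p e)).val : ℕ) : ZMod (p^2)); 0, 0] ∈ H := by
      have := H.pow_mem hU ((-(red p e)).val)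
      rw [kerUnit_pow] at this
      have heq : (((((-(red p e)).val : ℕ)) : ZMod (p^2))) • (!![0, 1; 0, 0] : Matrix _ _ _)
          = !![(0 : ZMod (p^2)), (((-(red p e)).val : ℕ) : ZMod (p^2)); 0, 0] := by
        ext i j
        fin_cases i <;> fin_cases j <;> simp
      rwa [heq] at this
    have h2' : kerUnit !![c, 0; 0, -c] ∈ H := by
      have := H.mul_mem hk1 h1
      rw [kerUnit_mul] at this
      have heq : kerUnit (!![c, e; 0, -c] + !![0, (((-(red p e)).val : ℕ) : ZMod (p^2)); 0, 0])
          = kerUnit !![c, 0; 0, -c] := by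
        apply kerUnit_congr
        ext i j
        fin_cases i <;> fin_cases j <;>
          simp [Matrix.map_apply, map_add, map_neg, map_natCast, hm]
        
      rwa [heq] at this
    have hk : ((((red p c)⁻¹).val : ℕ) : ZMod p) = (red p c)⁻¹ := ZMod.natCast_rightInverse _
    have key : (kerUnit !![c, 0; 0, -c])^(((red p c)⁻¹).val) = kerUnit !![1, 0; 0, -1] := by
      rw [kerUnit_pow]
      apply kerUnit_congr
      ext i j
      fin_cases i <;> fin_cases j <;>
        simp [Matrix.map_apply, _root_.map_mul, map_natCast, map_neg, _root_.map_one, hk, mul_neg,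
          inv_mul_cancel₀ hc]
    exact key ▸ H.pow_mem h2' _
end

section
/- Let p be a prime with p > 3 and let H be a subgroup of GL₂(ℤ/p²ℤ) such that φ(H) contains the matrix !![1,1;0,1]. Then H contains the element 1 + p·!![0,1;0,0]. -/
open Matrix

lemma red_zero_exists {p : ℕ} [Fact p.Prime] {x : ZMod (p^2)} (h : red p x = 0) :
    ∃ y, x = p * y := by
  rw [red, ZMod.castHom_apply, ← ZMod.natCast_val] at h
  obtain ⟨k, hk⟩ := (ZMod.natCast_eq_zero_iff _ _).mp h
  have hx : ((x.val : ℕ) : ZMod (p^2)) = x := by rw [ZMod.natCast_val, ZMod.cast_id]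
  exact ⟨k, by rw [← hx, hk]; push_cast; ring⟩

/-- Let `p > 3` be prime and `H ≤ GL₂(ℤ/p²ℤ)` with
`!![1,1;0,1] ∈ φ(H)`. Then `1 + p•!![0,1;0,0] ∈ H`. -/
theorem kerUnit_e12_mem {p : ℕ} [Fact p.Prime] (hp3 : 3 < p)
    (H : Subgroup (GL2 (p^2)))
    (hT : ∃ τ ∈ H, (↑(phi p τ) : Matrix (Fin 2) (Fin 2) (ZMod p)) = !![1, 1; 0, 1]) :
    kerUnit !![0, 1; 0, 0] ∈ H := by
  obtain ⟨τ, hτH, hτ⟩ := hT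
  have hp : p.Prime := Fact.out
  obtain ⟨M, hMτ⟩ : ∃ M, (↑τ : Matrix (Fin 2) (Fin 2) (ZMod (p^2))) = M := ⟨_, rfl⟩
  have hmap : M.map (red p) = !![1,1;0,1] := by rw [← hMτ]; exact hτ
  have e : ∀ i j, red p (M i j) = !![(1:ZMod p),1;0,1] i j := by
    intro i j; rw [← hmap]; rfl
  obtain ⟨a, ha⟩ := red_zero_exists (p := p) (x := M 0 0 - 1)
    (by rw [_root_.map_sub, _root_.map_one, e]; simp)
  obtain ⟨b, hb⟩ := red_zero_exists (p := p) (x := M 0 1 - 1)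
    (by rw [_root_.map_sub, _root_.map_one, e]; simp)
  obtain ⟨c, hc⟩ := red_zero_exists (p := p) (x := M 1 0)
    (by rw [e]; simp)
  obtain ⟨d, hd⟩ := red_zero_exists (p := p) (x := M 1 1 - 1)
    (by rw [_root_.map_sub, _root_.map_one, e]; simp)
  obtain ⟨B, hBdef⟩ : ∃ B : Matrix (Fin 2) (Fin 2) (ZMod (p^2)),
      B = !![(p:ZMod (p^2))*a, 1+(p:ZMod (p^2))*b; (p:ZMod (p^2))*c, (p:ZMod (p^2))*d] :=
    ⟨_, rfl⟩
  have ha' : M 0 0 = 1 + (p:ZMod (p^2))*a := by linear_combination ha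
  have hb' : M 0 1 = 1 + (p:ZMod (p^2))*b := by linear_combination hb
  have hd' : M 1 1 = 1 + (p:ZMod (p^2))*d := by linear_combination hd
  have hMB : M = B + 1 := by
    rw [Matrix.eta_fin_two M, ha', hb', hc, hd', hBdef, Matrix.one_fin_two]
    ext i j
    fin_cases i <;> fin_cases j <;> simp <;> ring
  have h2 : (p : ZMod (p^2)) * p = 0 := by
    rw [← Nat.cast_mul, ← pow_two, ZMod.natCast_self]
  have hB2 : B^2 = !![(p:ZMod (p^2))*c, (p:ZMod (p^2))*(a+d); 0, (p:ZMod (p^2))*c] := by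
    rw [pow_two B, hBdef]
    ext i j
    fin_cases i <;> fin_cases j <;>
      simp [Matrix.mul_apply, Fin.sum_univ_succ]
    · linear_combination (a*a + b*c) * h2
    · linear_combination (a*b + b*d + a + d - a - d) * h2
    · linear_combination (c*a + d*c) * h2
    · linear_combination (c*b + d*d) * h2
  have hB3 : B^3 = !![0, (p:ZMod (p^2))*c; 0, 0] := by
    rw [pow_succ B 2, hB2, hBdef]
    ext i j
    fin_cases i <;> fin_cases j <;>
      simp [Matrix.mul_apply, Fin.sum_univ_succ]
    · linear_combination (c*a + (a+d)*c) * h2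
    · linear_combination (c*b + (a+d)*d) * h2
    · linear_combination (c*c) * h2
    · linear_combination (c*d) * h2
  have hB4 : B^4 = 0 := by
    have : B^4 = B^3 * B := pow_succ B 3
    rw [this, hB3, hBdef]
    ext i j
    fin_cases i <;> fin_cases j <;>
      simp [Matrix.mul_apply, Fin.sum_univ_succ]
    · linear_combination (c*c) * h2
    · linear_combination (c*d) * h2
  obtain ⟨m2, hm2⟩ := hp.dvd_choose_self (by norm_num) (by omega : 2 < p)
  obtain ⟨m3, hm3⟩ := hp.dvd_choose_self (by norm_num) (by omega : 3 < p)
  have hc1 : ((p.choose 1 : ℕ) : ZMod (p^2)) = p := by rw [Nat.choose_one_right]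
  have hc2 : ((p.choose 2 : ℕ) : ZMod (p^2)) = p * (m2 : ZMod (p^2)) := by
    rw [hm2]; push_cast; ring
  have hc3 : ((p.choose 3 : ℕ) : ZMod (p^2)) = p * (m3 : ZMod (p^2)) := by
    rw [hm3]; push_cast; ring
  have key : τ ^ p = kerUnit !![0, 1; 0, 0] := by
    apply Units.ext
    rw [Units.val_pow_eq_pow_val]
    show (↑τ : Matrix (Fin 2) (Fin 2) (ZMod (p^2))) ^ p
      = 1 + (p : ZMod (p^2)) • !![0, 1; 0, 0]
    rw [hMτ, hMB, Commute.add_pow (Commute.one_right B)]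
    rw [← Finset.sum_subset (Finset.range_subset_range.mpr (by omega : 4 ≤ p + 1))
      (by
        intro k _ hk
        have h4 : 4 ≤ k := by
          by_contra h; exact hk (Finset.mem_range.mpr (by omega))
        obtain ⟨j, rfl⟩ : ∃ j, k = 4 + j := ⟨k - 4, by omega⟩
        rw [pow_add, hB4, zero_mul, zero_mul, zero_mul])]
    rw [Finset.sum_range_succ, Finset.sum_range_succ, Finset.sum_range_succ,
      Finset.sum_range_one]
    rw [pow_zero, pow_one, hB2, hB3, one_pow, one_pow, one_pow, one_pow,
      Matrix.natCast_fin_two (p.choose 0), Matrix.natCast_fin_two (p.choose 1),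
      Matrix.natCast_fin_two (p.choose 2), Matrix.natCast_fin_two (p.choose 3),
      hc1, hc2, hc3, Nat.choose_zero_right, Nat.cast_one, hBdef]
    ext i j
    fin_cases i <;> fin_cases j <;>
      simp [Matrix.mul_apply, Matrix.one_apply, Fin.sum_univ_succ]
    · linear_combination (a + c*m2) * h2
    · linear_combination (b + (a+d)*m2 + c*m3) * h2
    · linear_combination c * h2
    · linear_combination (d + c*m2) * h2
  exact key ▸ H.pow_mem hτH p
end
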